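/- For every tournament T in 𝔅 there exist a real a > 0 and a real c > 1 such that φ_T(n) ≥ a·cⁿ for all natural numbers n. -/

import Mathlib

universe u v

/-- `r` is a tournament relation on `V`: irreflexive and, for distinct vertices,
exactly one of the two directed edges is present. -/
def IsTournament {V : Type u} (r : V → V → Prop) : Prop :=
  (∀ x, ¬ r x x) ∧ ∀ x y : V, x ≠ y → (r x y ↔ ¬ r y x)

/-- A subset `A` is autonomous in the tournament `r`. -/
def Autonomous {V : Type u} (r : V → V → Prop) (A : Set V) : Prop :=
  ∀ x ∈ A, ∀ x' ∈ A, ∀ y ∉ A, (r x y ↔ r x' y)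

/-- A subset `A` is acyclic: it contains no 3-cycle. -/
def AcyclicSet {V : Type u} (r : V → V → Prop) (A : Set V) : Prop :=
  ¬ ∃ a ∈ A, ∃ b ∈ A, ∃ c ∈ A, r a b ∧ r b c ∧ r c a

/-- The acyclic component of a vertex `x`: the union of all acyclic autonomous
subsets containing `x`. -/
def acyclicComponent {V : Type u} (r : V → V → Prop) (x : V) : Set V :=
  ⋃₀ {A : Set V | x ∈ A ∧ Autonomous r A ∧ AcyclicSet r A}

/-- `A` is an acyclic component of the tournament `r`. -/
def IsAcyclicComponent {V : Type u} (r : V → V → Prop) (A : Set V) : Prop :=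
  ∃ x, A = acyclicComponent r x

/-- A tournament is acyclically indecomposable if every acyclic autonomous subset
has at most one element. -/
def AcyclicallyIndecomposable {V : Type u} (r : V → V → Prop) : Prop :=
  ∀ A : Set V, Autonomous r A → AcyclicSet r A → A.Subsingleton

/-- The type of acyclic components of `r`. -/
def AcComp {V : Type u} (r : V → V → Prop) : Type u :=
  {A : Set V // IsAcyclicComponent r A}

/-- The quotient tournament `Ť` on the set of acyclic components. -/
def quotRel {V : Type u} (r : V → V → Prop) : AcComp r → AcComp r → Prop :=
  fun A B => A ≠ B ∧ ∃ x ∈ A.val, ∃ y ∈ B.val, r x y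

/-- The lexicographical sum of the tournaments `rels i` indexed by the tournament `d`. -/
def lexSumRel {I : Type u} {F : I → Type v} (d : I → I → Prop)
    (rels : ∀ i, F i → F i → Prop) : (Σ i, F i) → (Σ i, F i) → Prop :=
  fun p q => (p.1 ≠ q.1 ∧ d p.1 q.1) ∨
    ∃ h : p.1 = q.1, rels q.1 (cast (congrArg F h) p.2) q.2

/-- The subtournaments induced on the finite sets `s` and `t` are isomorphic. -/
def InducedIso {V : Type u} (r : V → V → Prop) (s t : Finset V) : Prop :=
  ∃ e : {x // x ∈ s} ≃ {x // x ∈ t},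
    ∀ a b : {x // x ∈ s}, r a.val b.val ↔ r (e a).val (e b).val

/-- The profile of a tournament: the number of isomorphism classes of subtournaments
induced on `n`-element subsets of the vertex set. -/
noncomputable def profile {V : Type u} (r : V → V → Prop) (n : ℕ) : ℕ :=
  Nat.card (Quot (fun s t : {w : Finset V // w.card = n} => InducedIso r s.val t.val))

/-- `r` is (isomorphic to) a lexicographical sum of acyclic tournaments indexed by a
finite tournament. -/
def IsFiniteLexSumOfAcyclic {V : Type u} (r : V → V → Prop) : Prop :=
  ∃ (I : Type) (d : I → I → Prop) (F : I → Type u)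
    (rels : ∀ i, F i → F i → Prop),
    Finite I ∧ IsTournament d ∧
    (∀ i, IsTournament (rels i) ∧ AcyclicSet (rels i) Set.univ) ∧
    ∃ e : V ≃ (Σ i, F i), ∀ x y, r x y ↔ lexSumRel d rels (e x) (e y)

/-- A bundled tournament (vertex type together with its edge relation). -/
structure Tour : Type 1 where
  V : Type
  rel : V → V → Prop

/-- `S` is embeddable in the tournament `r`: `S` is isomorphic to a subtournament of `r`. -/
def Tour.EmbedsIn {W : Type u} (S : Tour) (r : W → W → Prop) : Prop :=
  ∃ f : S.V → W, Function.Injective f ∧ ∀ x y, S.rel x y ↔ r (f x) (f y)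

/-- The profile of a bundled tournament. -/
noncomputable def Tour.profile (T : Tour) (n : ℕ) : ℕ := _root_.profile T.rel n

/-- The quotient tournament `Ť` of a bundled tournament, on its acyclic components. -/
def Tour.check (T : Tour) : Tour := ⟨AcComp T.rel, quotRel T.rel⟩

/-- The tournament `C3[C]` for an acyclic tournament `C = (A, lt)`. -/
def c3Rel {A : Type} (lt : A → A → Prop) : A × Fin 3 → A × Fin 3 → Prop :=
  fun p q => lt p.1 q.1 ∨ (p.1 = q.1 ∧
    ((p.2 = 0 ∧ q.2 = 1) ∨ (p.2 = 1 ∧ q.2 = 2) ∨ (p.2 = 2 ∧ q.2 = 0)))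

/-- The tournament `V[C]` for an acyclic tournament `C = (A, lt)`; `none` is the extra vertex. -/
def vRel {A : Type} (lt : A → A → Prop) (p q : Option (A × Fin 2)) : Prop :=
  match p, q with
  | some p, some q => lt p.1 q.1 ∨ (p.1 = q.1 ∧ p.2 = 0 ∧ q.2 = 1)
  | none, some q => q.2 = 0
  | some p, none => p.2 = 1
  | none, none => False

/-- The tournament `T[C]` for an acyclic tournament `C = (A, lt)`. -/
def tRel {A : Type} (lt : A → A → Prop) : A × Fin 2 → A × Fin 2 → Prop :=
  fun p q =>
    (p.2 = 0 ∧ q.2 = 0 ∧ lt p.1 q.1) ∨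
    (p.1 = q.1 ∧ p.2 = 0 ∧ q.2 = 1) ∨
    (p.2 = 1 ∧ q.2 = 1 ∧ lt p.1 q.1) ∨
    (p.2 = 1 ∧ q.2 = 0 ∧ lt q.1 p.1) ∨
    (p.2 = 0 ∧ q.2 = 1 ∧ lt q.1 p.1)

/-- The tournament `U[C]` for an acyclic tournament `C = (A, lt)`. -/
def uRel {A : Type} (lt : A → A → Prop) : A × Fin 2 → A × Fin 2 → Prop :=
  fun p q =>
    (p.2 = 0 ∧ q.2 = 0 ∧ lt p.1 q.1) ∨
    (p.1 = q.1 ∧ p.2 = 0 ∧ q.2 = 1) ∨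
    (p.2 = 1 ∧ q.2 = 1 ∧ lt q.1 p.1) ∨
    (p.2 = 0 ∧ q.2 = 1 ∧ lt p.1 q.1) ∨
    (p.2 = 1 ∧ q.2 = 0 ∧ lt p.1 q.1)

/-- The tournament `H[C]` for an acyclic tournament `C = (A, lt)`. -/
def hRel {A : Type} (lt : A → A → Prop) : A × Fin 2 → A × Fin 2 → Prop :=
  fun p q =>
    (p.2 = 0 ∧ q.2 = 0 ∧ lt p.1 q.1) ∨
    (p.1 = q.1 ∧ p.2 = 0 ∧ q.2 = 1) ∨
    (p.2 = 1 ∧ q.2 = 1 ∧ lt p.1 q.1) ∨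
    (p.2 = 1 ∧ q.2 = 0 ∧ lt q.1 p.1) ∨
    (p.2 = 1 ∧ q.2 = 0 ∧ lt p.1 q.1)

/-- The tournament `K[C]` for an acyclic tournament `C = (A, lt)`. -/
def kRel {A : Type} (lt : A → A → Prop) : A × Fin 2 → A × Fin 2 → Prop :=
  fun p q =>
    (p.2 = 0 ∧ q.2 = 0 ∧ lt p.1 q.1) ∨
    (p.1 = q.1 ∧ p.2 = 0 ∧ q.2 = 1) ∨
    (p.2 = 1 ∧ q.2 = 1 ∧ lt q.1 p.1) ∨
    (p.2 = 1 ∧ q.2 = 0 ∧ lt q.1 p.1) ∨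
    (p.2 = 1 ∧ q.2 = 0 ∧ lt p.1 q.1)

def c3Tour (A : Type) (lt : A → A → Prop) : Tour := ⟨A × Fin 3, c3Rel lt⟩
def vTour (A : Type) (lt : A → A → Prop) : Tour := ⟨Option (A × Fin 2), vRel lt⟩
def tTour (A : Type) (lt : A → A → Prop) : Tour := ⟨A × Fin 2, tRel lt⟩
def uTour (A : Type) (lt : A → A → Prop) : Tour := ⟨A × Fin 2, uRel lt⟩
def hTour (A : Type) (lt : A → A → Prop) : Tour := ⟨A × Fin 2, hRel lt⟩
def kTour (A : Type) (lt : A → A → Prop) : Tour := ⟨A × Fin 2, kRel lt⟩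

/-- The order type `ω`: the natural numbers with the usual strict order. -/
def omegaLT : ℕ → ℕ → Prop := fun m n => m < n

/-- The order type `ω*`: the natural numbers with the reversed strict order. -/
def omegaStarLT : ℕ → ℕ → Prop := fun m n => n < m

/-- The set `𝔅` of twelve tournaments. -/
def frakB : List Tour :=
  [c3Tour ℕ omegaLT, vTour ℕ omegaLT, tTour ℕ omegaLT,
   uTour ℕ omegaLT, hTour ℕ omegaLT, kTour ℕ omegaLT,
   c3Tour ℕ omegaStarLT, vTour ℕ omegaStarLT, tTour ℕ omegaStarLT,
   uTour ℕ omegaStarLT, hTour ℕ omegaStarLT, kTour ℕ omegaStarLT]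

/-- The set `𝔅_{n̲}` of six tournaments built on the acyclic tournament `({0,…,n−1},<)`. -/
def frakBn (n : ℕ) : List Tour :=
  [c3Tour (Fin n) (· < ·), vTour (Fin n) (· < ·), tTour (Fin n) (· < ·),
   uTour (Fin n) (· < ·), hTour (Fin n) (· < ·), kTour (Fin n) (· < ·)]

open Finset

section Generic
open scoped Classical
variable {V : Type u} {W : Type v}

theorem inducedIso_refl (r : V → V → Prop) (s : Finset V) : InducedIso r s s :=
  ⟨Equiv.refl _, fun _ _ => Iff.rfl⟩

theorem inducedIso_symm {r : V → V → Prop} {s t : Finset V} (h : InducedIso r s t) :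
    InducedIso r t s := by
  obtain ⟨e, he⟩ := h
  exact ⟨e.symm, fun a b => by
    have := he (e.symm a) (e.symm b); simp at this; exact this.symm⟩

theorem inducedIso_trans {r : V → V → Prop} {s t u : Finset V}
    (h1 : InducedIso r s t) (h2 : InducedIso r t u) : InducedIso r s u := by
  obtain ⟨e, he⟩ := h1; obtain ⟨e', he'⟩ := h2
  exact ⟨e.trans e', fun a b => (he a b).trans (he' (e a) (e b))⟩

/-- iso-equivalence on matrices -/
def matIso (n : ℕ) (M M' : Fin n → Fin n → Prop) : Prop :=
  ∃ σ : Fin n ≃ Fin n, ∀ a b, M a b ↔ M' (σ a) (σ b)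

theorem matIso_equivalence (n : ℕ) : Equivalence (matIso n) := by
  constructor
  · exact fun M => ⟨Equiv.refl _, fun _ _ => Iff.rfl⟩
  · rintro M M' ⟨σ, hσ⟩
    exact ⟨σ.symm, fun a b => by have := hσ (σ.symm a) (σ.symm b); simp at this; exact this.symm⟩
  · rintro M M' M'' ⟨σ, hσ⟩ ⟨τ, hτ⟩
    exact ⟨σ.trans τ, fun a b => (hσ a b).trans (hτ (σ a) (σ b))⟩

noncomputable def finsetEquivFin {s : Finset V} {n : ℕ} (h : s.card = n) :
    {x // x ∈ s} ≃ Fin n :=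
  Fintype.equivFinOfCardEq (by simpa using h)

noncomputable def matOf (r : V → V → Prop) {n : ℕ} (s : {w : Finset V // w.card = n}) :
    Fin n → Fin n → Prop :=
  fun a b => r ((finsetEquivFin s.2).symm a).val ((finsetEquivFin s.2).symm b).val

theorem matIso_of_inducedIso (r : V → V → Prop) {n : ℕ}
    (s t : {w : Finset V // w.card = n}) (h : InducedIso r s.val t.val) :
    matIso n (matOf r s) (matOf r t) := by
  obtain ⟨e, he⟩ := h
  refine ⟨(finsetEquivFin s.2).symm.trans (e.trans (finsetEquivFin t.2)), fun a b => ?_⟩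
  simpa [matOf] using he ((finsetEquivFin s.2).symm a) ((finsetEquivFin s.2).symm b)

theorem inducedIso_of_matIso (r : V → V → Prop) {n : ℕ}
    (s t : {w : Finset V // w.card = n}) (h : matIso n (matOf r s) (matOf r t)) :
    InducedIso r s.val t.val := by
  obtain ⟨σ, hσ⟩ := h
  refine ⟨(finsetEquivFin s.2).trans (σ.trans (finsetEquivFin t.2).symm), fun a b => ?_⟩
  have := hσ (finsetEquivFin s.2 a) (finsetEquivFin s.2 b)
  simpa [matOf] using this

instance (n : ℕ) : Finite (Quot (matIso n)) := Quot.finite _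

theorem finite_profile_quot (r : V → V → Prop) (n : ℕ) :
    Finite (Quot (fun s t : {w : Finset V // w.card = n} => InducedIso r s.val t.val)) := by
  have hf : ∀ s t : {w : Finset V // w.card = n}, InducedIso r s.val t.val →
      Quot.mk (matIso n) (matOf r s) = Quot.mk (matIso n) (matOf r t) :=
    fun s t h => Quot.sound (matIso_of_inducedIso r s t h)
  apply Finite.of_injective (Quot.lift (fun s => Quot.mk (matIso n) (matOf r s)) hf)
  rintro ⟨s⟩ ⟨t⟩ h
  simp only [Quot.lift_mk] at h
  have h2 : matIso n (matOf r s) (matOf r t) :=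
    ((matIso_equivalence n).eqvGen_iff).mp (Quot.eq.mp h)
  exact Quot.sound (inducedIso_of_matIso r s t h2)

theorem one_le_profile (r : V → V → Prop) [Infinite V] (n : ℕ) : 1 ≤ profile r n := by
  obtain ⟨s, hs⟩ := Infinite.exists_subset_card_eq V n
  have : Finite (Quot (fun s t : {w : Finset V // w.card = n} => InducedIso r s.val t.val)) :=
    finite_profile_quot r n
  have : Nonempty (Quot (fun s t : {w : Finset V // w.card = n} => InducedIso r s.val t.val)) :=
    ⟨Quot.mk _ ⟨s, hs⟩⟩
  exact Nat.one_le_iff_ne_zero.mpr (Nat.card_ne_zero.mpr ⟨this, ‹_›⟩)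

/-- out-degree of `x` within `s`. -/
noncomputable def odeg (r : V → V → Prop) (s : Finset V) (x : V) : ℕ :=
  (s.filter (fun y => r x y)).card

/-- score multiset. -/
noncomputable def scoreM (r : V → V → Prop) (s : Finset V) : Multiset ℕ :=
  s.val.map (odeg r s)

theorem odeg_iso {r : V → V → Prop} {s t : Finset V}
    (e : {x // x ∈ s} ≃ {x // x ∈ t})
    (he : ∀ a b : {x // x ∈ s}, r a.val b.val ↔ r (e a).val (e b).val)
    (a : {x // x ∈ s}) : odeg r t (e a).val = odeg r s a.val := by
  classical
  unfold odeg
  rw [eq_comm]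
  apply Finset.card_bij (fun b hb => (e ⟨b, (Finset.mem_filter.mp hb).1⟩).val)
  · intro b hb
    have hb' := Finset.mem_filter.mp hb
    exact Finset.mem_filter.mpr ⟨(e ⟨b, hb'.1⟩).2, (he a ⟨b, hb'.1⟩).mp hb'.2⟩
  · intro b hb c hc h
    have : e ⟨b, (Finset.mem_filter.mp hb).1⟩ = e ⟨c, (Finset.mem_filter.mp hc).1⟩ :=
      Subtype.ext h
    simpa using e.injective this
  · intro b hb
    have hb' := Finset.mem_filter.mp hb
    refine ⟨(e.symm ⟨b, hb'.1⟩).val, Finset.mem_filter.mpr ⟨(e.symm ⟨b, hb'.1⟩).2, ?_⟩, by simp⟩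
    have := (he a (e.symm ⟨b, hb'.1⟩)).symm
    simp at this
    exact this.mp hb'.2

theorem scoreM_iso {r : V → V → Prop} {s t : Finset V} (h : InducedIso r s t) :
    scoreM r s = scoreM r t := by
  obtain ⟨e, he⟩ := h
  have hemb : Function.Injective (fun a : {x // x ∈ s} => (e a).val) := by
    intro a b hab
    exact e.injective (Subtype.ext hab)
  have ht : t = s.attach.map ⟨fun a => (e a).val, hemb⟩ := by
    ext x
    simp only [Finset.mem_map, Finset.mem_attach, Function.Embedding.coeFn_mk, true_and]
    constructor
    · intro hx; exact ⟨e.symm ⟨x, hx⟩, by simp⟩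
    · rintro ⟨a, rfl⟩; exact (e a).2
  rw [scoreM, scoreM]
  conv_rhs => rw [ht]
  rw [Finset.map_val, Multiset.map_map]
  have h1 : (odeg r (s.attach.map ⟨fun a => (e a).val, hemb⟩) ∘
      ⇑(⟨fun a => (e a).val, hemb⟩ : {x // x ∈ s} ↪ V)) = fun a => odeg r t (e a).val := by
    funext a; rw [← ht]; rfl
  rw [h1]
  rw [Multiset.map_congr rfl (fun a _ => odeg_iso e he a)]
  have h2 := Multiset.attach_map_val' s.val (odeg r s)
  exact h2.symm

theorem profile_ge_pow (r : V → V → Prop) (n k : ℕ)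
    (F : (Fin k → Bool) → Finset V) (hc : ∀ f, (F f).card = n)
    (hinj : ∀ f f', scoreM r (F f) = scoreM r (F f') → f = f') :
    2 ^ k ≤ profile r n := by
  classical
  set Q := Quot (fun s t : {w : Finset V // w.card = n} => InducedIso r s.val t.val) with hQ
  have : Finite Q := finite_profile_quot r n
  have hG : Function.Injective (fun f : Fin k → Bool => (Quot.mk _ ⟨F f, hc f⟩ : Q)) := by
    intro f f' h
    have hiso : InducedIso r (F f) (F f') := by
      have hequiv : Equivalence
          (fun s t : {w : Finset V // w.card = n} => InducedIso r s.val t.val) :=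
        ⟨fun s => inducedIso_refl r s.val, fun h => inducedIso_symm h,
          fun h1 h2 => inducedIso_trans h1 h2⟩
      exact (hequiv.eqvGen_iff).mp (Quot.eq.mp h)
    exact hinj f f' (scoreM_iso hiso)
  calc 2 ^ k = Nat.card (Fin k → Bool) := by simp [Nat.card_eq_fintype_card]
    _ ≤ Nat.card Q := Nat.card_le_card_of_injective _ hG
    _ = profile r n := rfl

/-- transfer of score multisets along a relation-preserving embedding -/
theorem scoreM_map {α : Type u} (r : W → W → Prop) (R : α → α → Prop) (u : Finset α)
    (ι : α ↪ W) (h : ∀ a ∈ u, ∀ b ∈ u, R a b ↔ r (ι a) (ι b)) :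
    scoreM r (u.map ι) = scoreM R u := by
  classical
  unfold scoreM
  rw [Finset.map_val, Multiset.map_map]
  apply Multiset.map_congr rfl
  intro a ha
  show odeg r (u.map ι) (ι a) = odeg R u a
  unfold odeg
  rw [eq_comm]
  apply Finset.card_bij (fun b _ => ι b)
  · intro b hb
    have hb' := Finset.mem_filter.mp hb
    exact Finset.mem_filter.mpr ⟨Finset.mem_map_of_mem ι hb'.1,
      (h a ha b hb'.1).mp hb'.2⟩
  · intro b _ c _ hbc; exact ι.injective hbc
  · intro b hb
    have hb' := Finset.mem_filter.mp hb
    obtain ⟨c, hc, rfl⟩ := Finset.mem_map.mp hb'.1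
    exact ⟨c, Finset.mem_filter.mpr ⟨hc, (h a ha c hc).mpr hb'.2⟩, rfl⟩

end Generic



section Framework
open scoped Classical
variable {k : ℕ}

def cv (f : Fin k → Bool) (i : Fin k) : ℕ := if f i then 1 else 0

def eF (f : Fin k → Bool) (i : Fin k) : ℕ := 3*(i:ℕ)+3 + cv f i

def SF (f : Fin k → Bool) : Finset ℕ := Finset.univ.image (eF f)

noncomputable def chiF (f : Fin k → Bool) (j : ℕ) : ℕ := if j ∈ SF f then 1 else 0

noncomputable def rhoF (f : Fin k → Bool) (j : ℕ) : ℕ :=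
  ((Finset.univ : Finset (Fin k)).filter (fun i => eF f i < j)).card

variable {f : Fin k → Bool}

theorem cv_le_one (f : Fin k → Bool) (i : Fin k) : cv f i ≤ 1 := by
  unfold cv; split <;> omega

theorem eF_lt_iff {i i' : Fin k} : eF f i < eF f i' ↔ (i:ℕ) < (i':ℕ) := by
  have h1 := cv_le_one f i; have h2 := cv_le_one f i'
  constructor
  · intro h
    by_contra hc
    push_neg at hc
    rcases Nat.lt_or_ge (i':ℕ) (i:ℕ) with h' | h'
    · unfold eF at h; omega
    · have : i' = i := Fin.ext (by omega)
      subst this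
      exact absurd h (lt_irrefl _)
  · intro h; unfold eF; omega

theorem eF_inj {i i' : Fin k} (h : eF f i = eF f i') : i = i' := by
  have h1 := cv_le_one f i; have h2 := cv_le_one f i'
  have : (i:ℕ) = (i':ℕ) := by unfold eF at h; omega
  exact Fin.ext this

theorem mem_SF {x : ℕ} : x ∈ SF f ↔ ∃ i, eF f i = x := by simp [SF]

theorem eF_lt_bound (i : Fin k) : eF f i < 3*k+2 := by
  have h1 := cv_le_one f i; have h2 := i.2; unfold eF; omega

theorem eF_ge (i : Fin k) : 3 ≤ eF f i := by unfold eF; omega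

theorem chiF_le_one (f : Fin k → Bool) (j : ℕ) : chiF f j ≤ 1 := by
  unfold chiF; split <;> omega

theorem SF_card (f : Fin k → Bool) : (SF f).card = k := by
  rw [SF, Finset.card_image_of_injective _ (fun a b => eF_inj)]
  simp

theorem mem_S_3i3 (i : Fin k) : (3*(i:ℕ)+3 ∈ SF f) ↔ f i = false := by
  rw [mem_SF]
  constructor
  · rintro ⟨i', hi'⟩
    have h1 := cv_le_one f i'
    have hii : (i':ℕ) = (i:ℕ) ∧ cv f i' = 0 := by unfold eF at hi'; omega
    have : i' = i := Fin.ext hii.1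
    subst this
    have := hii.2; unfold cv at this
    by_contra hc; simp at hc; rw [hc] at this; simp at this
  · intro hf
    exact ⟨i, by unfold eF cv; rw [hf]; simp⟩

theorem mem_S_3i4 (i : Fin k) : (3*(i:ℕ)+4 ∈ SF f) ↔ f i = true := by
  rw [mem_SF]
  constructor
  · rintro ⟨i', hi'⟩
    have h1 := cv_le_one f i'
    have hii : (i':ℕ) = (i:ℕ) ∧ cv f i' = 1 := by unfold eF at hi'; omega
    have : i' = i := Fin.ext hii.1
    subst this
    have := hii.2; unfold cv at this
    by_contra hc; simp at hc; rw [hc] at this; simp at this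
  · intro hf
    exact ⟨i, by unfold eF cv; rw [hf]; simp⟩

theorem chi_eF (i : Fin k) : chiF f (eF f i) = 1 := by
  unfold chiF; rw [if_pos (mem_SF.mpr ⟨i, rfl⟩)]

/-- helper: cardinality of `{i : Fin k | i < t}` -/
theorem card_filter_coe_lt (k t : ℕ) :
    (((Finset.univ : Finset (Fin k))).filter (fun i : Fin k => (i:ℕ) < t)).card = min t k := by
  rcases Nat.lt_or_ge t k with h | h
  · have heq : ((Finset.univ : Finset (Fin k)).filter (fun i : Fin k => (i:ℕ) < t))
        = Finset.Iio (⟨t, h⟩ : Fin k) := by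
      ext i; simp [Finset.mem_Iio, Fin.lt_def]
    rw [heq, Fin.card_Iio]
    simp; omega
  · have heq : ((Finset.univ : Finset (Fin k)).filter (fun i : Fin k => (i:ℕ) < t))
        = Finset.univ := by
      ext i; simp; have := i.2; omega
    rw [heq]; simp; omega

theorem rho_min {j t : ℕ} (h : ∀ i : Fin k, eF f i < j ↔ (i:ℕ) < t) :
    rhoF f j = min t k := by
  rw [rhoF]
  rw [Finset.filter_congr (fun i _ => by rw [h i])]
  exact card_filter_coe_lt k t

theorem rho_eF (i : Fin k) : rhoF f (eF f i) = (i:ℕ) := by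
  rw [rho_min (fun i' => eF_lt_iff)]
  have := i.2; omega

theorem rho_3i3 (i : Fin k) : rhoF f (3*(i:ℕ)+3) = (i:ℕ) := by
  rw [rho_min (t := (i:ℕ)) (fun i' => by
    have h1 := cv_le_one f i'; unfold eF; omega)]
  have := i.2; omega

theorem rho_3i4 (i : Fin k) (hfi : f i = false) : rhoF f (3*(i:ℕ)+4) = (i:ℕ)+1 := by
  have key : ∀ i' : Fin k, eF f i' < 3*(i:ℕ)+4 ↔ (i':ℕ) < (i:ℕ)+1 := by
    intro i'
    have h1 := cv_le_one f i'
    constructor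
    · intro h; unfold eF at h; omega
    · intro h
      rcases Nat.lt_or_ge (i':ℕ) (i:ℕ) with h' | h'
      · unfold eF; omega
      · have : i' = i := Fin.ext (by omega)
        subst this
        unfold eF cv; rw [hfi]; simp
  rw [rho_min key]; have := i.2; omega

theorem rho_le (f : Fin k → Bool) (j : ℕ) : rhoF f j ≤ k := by
  rw [rhoF]
  calc _ ≤ (Finset.univ : Finset (Fin k)).card := Finset.card_filter_le _ _
    _ = k := by simp

theorem rho_big {j : ℕ} (h : 3*k+2 ≤ j) : rhoF f j = k := by
  rw [rho_min (t := k) (fun i' => by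
    have := eF_lt_bound (f := f) i'; have := i'.2; constructor <;> intro <;> omega)]
  omega

theorem rho_mono {j j' : ℕ} (h : j ≤ j') : rhoF f j ≤ rhoF f j' := by
  apply Finset.card_le_card
  intro i hi
  simp only [Finset.mem_filter, Finset.mem_univ, true_and] at hi ⊢
  omega

theorem rho_succ (f : Fin k → Bool) (j : ℕ) : rhoF f (j+1) = rhoF f j + chiF f j := by
  unfold rhoF chiF
  by_cases hj : j ∈ SF f
  · rw [if_pos hj]
    obtain ⟨i0, hi0⟩ := mem_SF.mp hj
    have : (Finset.univ : Finset (Fin k)).filter (fun i => eF f i < j+1)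
        = insert i0 ((Finset.univ : Finset (Fin k)).filter (fun i => eF f i < j)) := by
      ext i
      simp only [Finset.mem_filter, Finset.mem_insert, Finset.mem_univ, true_and]
      constructor
      · intro hi
        rcases Nat.lt_or_ge (eF f i) j with h | h
        · exact Or.inr h
        · have : eF f i = j := by omega
          exact Or.inl (eF_inj (this.trans hi0.symm))
      · rintro (rfl | hi)
        · omega
        · omega
    rw [this, Finset.card_insert_of_notMem (by simp [hi0])]
  · rw [if_neg hj]
    have : (Finset.univ : Finset (Fin k)).filter (fun i => eF f i < j+1)
        = (Finset.univ : Finset (Fin k)).filter (fun i => eF f i < j) := by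
      ext i
      simp only [Finset.mem_filter, Finset.mem_univ, true_and]
      constructor
      · intro hi
        rcases Nat.lt_or_ge (eF f i) j with h | h
        · exact h
        · exfalso; exact hj (mem_SF.mpr ⟨i, by omega⟩)
      · intro hi; omega
    rw [this]; omega

theorem rho_le_self (f : Fin k → Bool) (j : ℕ) : rhoF f j ≤ j := by
  induction j with
  | zero => simp [rhoF]
  | succ n ih => rw [rho_succ]; have := chiF_le_one f n; omega

theorem card_SF_filter_lt (f : Fin k → Bool) (j : ℕ) :
    ((SF f).filter (· < j)).card = rhoF f j := by
  rw [SF, Finset.filter_image, Finset.card_image_of_injective _ (fun a b => eF_inj)]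
  rfl

theorem card_SF_filter_gt (f : Fin k → Bool) (j : ℕ) :
    ((SF f).filter (fun x => j < x)).card = k - rhoF f j - chiF f j := by
  classical
  have h3 : ((SF f).filter (fun x => j < x)).card + ((SF f).filter (fun x => ¬ j < x)).card
      = (SF f).card := Finset.card_filter_add_card_filter_not _
  have h4 : (SF f).filter (fun x => ¬ j < x)
      = ((SF f).filter (· < j)) ∪ ((SF f).filter (· = j)) := by
    ext x; simp only [Finset.mem_filter, Finset.mem_union]
    by_cases hx : x ∈ SF f <;> simp [hx] <;> omega
  have h5 : Disjoint ((SF f).filter (· < j)) ((SF f).filter (· = j)) := by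
    rw [Finset.disjoint_filter]; intro x _ h1 h2; omega
  have h6 : ((SF f).filter (· = j)).card = chiF f j := by
    rw [Finset.filter_eq', chiF]
    split <;> simp_all
  rw [h4, Finset.card_union_of_disjoint h5, card_SF_filter_lt, h6, SF_card] at h3
  have := rho_le f j
  have := chiF_le_one f j
  omega

theorem card_SF_filter_eq (f : Fin k → Bool) (j : ℕ) :
    ((SF f).filter (fun x => x = j)).card = chiF f j := by
  rw [Finset.filter_eq', chiF]; split <;> simp_all

theorem card_SF_filter_ne (f : Fin k → Bool) (j : ℕ) :
    ((SF f).filter (fun x => x ≠ j)).card = k - chiF f j := by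
  classical
  have h3 : ((SF f).filter (fun x => x ≠ j)).card + ((SF f).filter (fun x => ¬ x ≠ j)).card
      = (SF f).card := Finset.card_filter_add_card_filter_not _
  have h4 : ((SF f).filter (fun x => ¬ x ≠ j)).card = chiF f j := by
    simp only [ne_eq, Decidable.not_not]
    exact card_SF_filter_eq f j
  rw [SF_card] at h3
  omega

theorem card_range_filter_gt {m j : ℕ} (h : j < m) :
    ((Finset.range m).filter (fun x => j < x)).card = m - j - 1 := by
  have : (Finset.range m).filter (fun x => j < x) = Finset.Ico (j+1) m := by
    ext x; simp [Finset.mem_filter, Finset.mem_range, Finset.mem_Ico]; omega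
  rw [this, Nat.card_Ico]; omega

theorem card_range_filter_lt {m j : ℕ} (h : j ≤ m) :
    ((Finset.range m).filter (fun x => x < j)).card = j := by
  have : (Finset.range m).filter (fun x => x < j) = Finset.range j := by
    ext x; simp [Finset.mem_filter, Finset.mem_range]; omega
  rw [this, Finset.card_range]

theorem card_range_filter_ne {m j : ℕ} (h : j < m) :
    ((Finset.range m).filter (fun x => x ≠ j)).card = m - 1 := by
  classical
  have h3 : ((Finset.range m).filter (fun x => x ≠ j)).card
      + ((Finset.range m).filter (fun x => ¬ x ≠ j)).card
      = m := by
    have := Finset.card_filter_add_card_filter_not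
      (s := Finset.range m) (p := fun x => x ≠ j)
    simpa using this
  have h4 : ((Finset.range m).filter (fun x => ¬ x ≠ j)).card = 1 := by
    have : (Finset.range m).filter (fun x => ¬ x ≠ j) = {j} := by
      ext x
      simp only [Finset.mem_filter, Finset.mem_range, ne_eq, Decidable.not_not,
        Finset.mem_singleton]
      omega
    rw [this]; simp
  omega

/-- `w j = j - rhoF f j` is strictly increasing on the complement of `S`. -/
theorem w_lt_w {j j' : ℕ} (hj : j ∉ SF f) (h : j < j') :
    j - rhoF f j < j' - rhoF f j' := by
  have hstep : rhoF f (j+1) = rhoF f j := by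
    rw [rho_succ]; unfold chiF; rw [if_neg hj]; omega
  have hmono : rhoF f j' ≤ rhoF f (j+1) + (j' - (j+1)) := by
    have : rhoF f j' ≤ rhoF f (j+1) + (j' - (j+1)) := by
      clear hstep
      induction j' with
      | zero => omega
      | succ n ih =>
        rcases Nat.lt_or_ge (j+1) (n+1) with h1 | h1
        · have := ih (by omega)
          rw [rho_succ]
          have := chiF_le_one f n
          omega
        · have : j + 1 = n + 1 := by omega
          rw [this]; omega
    exact this
  have l1 := rho_le_self f j
  have l2 := rho_le_self f j'
  omega

/-- existence of a `w`-preimage outside `S`. -/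
theorem w_surj {m t : ℕ} (hk : 3*k+2 ≤ m) (ht : t < m - k) :
    ∃ j, j < m ∧ j ∉ SF f ∧ j - rhoF f j = t := by
  classical
  set r := (((Finset.univ : Finset (Fin k))).filter (fun i : Fin k => 2*(i:ℕ)+3+cv f i ≤ t)).card with hr
  have hrk : r ≤ k := by
    calc r ≤ (Finset.univ : Finset (Fin k)).card := Finset.card_filter_le _ _
      _ = k := by simp
  -- characterization: 2i+3+cv i ≤ t ↔ i < r
  have hchar : ∀ i : Fin k, 2*(i:ℕ)+3+cv f i ≤ t ↔ (i:ℕ) < r := by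
    intro i
    constructor
    · intro hi
      have hsub : (((Finset.univ : Finset (Fin k))).filter (fun i' : Fin k => (i':ℕ) < (i:ℕ)+1))
          ⊆ (((Finset.univ : Finset (Fin k))).filter (fun i' : Fin k => 2*(i':ℕ)+3+cv f i' ≤ t)) := by
        intro i' hi'
        simp only [Finset.mem_filter, Finset.mem_univ, true_and] at hi' ⊢
        rcases Nat.lt_or_ge (i':ℕ) (i:ℕ) with h' | h'
        · have c1 := cv_le_one f i'; have c2 := cv_le_one f i; omega
        · have : i' = i := Fin.ext (by omega)
          subst this; exact hi
      have := Finset.card_le_card hsub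
      rw [card_filter_coe_lt] at this
      have := i.2
      omega
    · intro hi
      by_contra hc
      push_neg at hc
      have hsub : (((Finset.univ : Finset (Fin k))).filter (fun i' : Fin k => 2*(i':ℕ)+3+cv f i' ≤ t))
          ⊆ (((Finset.univ : Finset (Fin k))).filter (fun i' : Fin k => (i':ℕ) < (i:ℕ))) := by
        intro i' hi'
        simp only [Finset.mem_filter, Finset.mem_univ, true_and] at hi' ⊢
        by_contra hge
        push_neg at hge
        rcases Nat.lt_or_ge (i:ℕ) (i':ℕ) with h' | h'
        · have c1 := cv_le_one f i'; have c2 := cv_le_one f i; omega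
        · have : i' = i := Fin.ext (by omega)
          subst this; omega
      have := Finset.card_le_card hsub
      rw [card_filter_coe_lt] at this
      omega
  refine ⟨t + r, by omega, ?_, ?_⟩
  · intro hmem
    obtain ⟨i, hi⟩ := mem_SF.mp hmem
    rcases Nat.lt_or_ge (2*(i:ℕ)+3+cv f i) (t+1) with h1 | h1
    · have := (hchar i).mp (by omega)
      unfold eF at hi
      omega
    · have : ¬ ((i:ℕ) < r) := fun hc => by have := (hchar i).mpr hc; omega
      unfold eF at hi
      omega
  · have hrho : rhoF f (t+r) = r := by
      rw [rho_min (t := r) (fun i => ?_)]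
      · omega
      · constructor
        · intro hi
          by_contra hc
          push_neg at hc
          have : ¬ (2*(i:ℕ)+3+cv f i ≤ t) := fun h => by have := (hchar i).mp h; omega
          unfold eF at hi
          omega
        · intro hi
          have := (hchar i).mpr hi
          unfold eF
          omega
    omega

/-- `u j = j + rhoF f j` is strictly monotone. -/
theorem u_strictMono {j j' : ℕ} (h : j < j') : j + rhoF f j < j' + rhoF f j' := by
  have : rhoF f j ≤ rhoF f j' := rho_mono (by omega)
  omega

theorem u_skip {i : Fin k} (hfi : f i = false) (j : ℕ) :
    j + rhoF f j ≠ 4*(i:ℕ)+4 := by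
  have h1 : (3*(i:ℕ)+3) + rhoF f (3*(i:ℕ)+3) = 4*(i:ℕ)+3 := by rw [rho_3i3]; ring
  have h2 : (3*(i:ℕ)+4) + rhoF f (3*(i:ℕ)+4) = 4*(i:ℕ)+5 := by rw [rho_3i4 i hfi]; ring
  rcases Nat.lt_or_ge j (3*(i:ℕ)+4) with h | h
  · rcases Nat.lt_or_ge j (3*(i:ℕ)+3) with h' | h'
    · have := u_strictMono (f := f) h'
      omega
    · have : j = 3*(i:ℕ)+3 := by omega
      subst this
      omega
  · rcases Nat.lt_or_ge (3*(i:ℕ)+4) j with h' | h'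
    · have := u_strictMono (f := f) h'
      omega
    · have : j = 3*(i:ℕ)+4 := by omega
      subst this
      omega

theorem u_eF (i : Fin k) : eF f i + rhoF f (eF f i) = 4*(i:ℕ)+3+cv f i := by
  rw [rho_eF]; unfold eF; ring

end Framework

section TwoPart
open scoped Classical
universe w1 w2 w3
variable {W : Type w1} {α : Type w2} {β : Type w3} [DecidableEq W]

theorem odeg_twoPart (R : W → W → Prop) (A : Finset α) (B : Finset β)
    (gA : α ↪ W) (gB : β ↪ W) (hd : Disjoint (A.map gA) (B.map gB)) (x : W) :
    odeg R (A.map gA ∪ B.map gB) x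
      = (A.filter fun a => R x (gA a)).card + (B.filter fun b => R x (gB b)).card := by
  unfold odeg
  rw [Finset.filter_union]
  rw [Finset.card_union_of_disjoint (Finset.disjoint_filter_filter hd)]
  rw [Finset.filter_map, Finset.filter_map, Finset.card_map, Finset.card_map]
  rfl

theorem count_twoPart (R : W → W → Prop) (A : Finset α) (B : Finset β)
    (gA : α ↪ W) (gB : β ↪ W) (hd : Disjoint (A.map gA) (B.map gB)) (v : ℕ) :
    Multiset.count v (scoreM R (A.map gA ∪ B.map gB))
      = (A.filter fun a => v = odeg R (A.map gA ∪ B.map gB) (gA a)).card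
        + (B.filter fun b => v = odeg R (A.map gA ∪ B.map gB) (gB b)).card := by
  set s := A.map gA ∪ B.map gB with hs
  rw [scoreM, Multiset.count_map]
  have : Multiset.card (Multiset.filter (fun a => v = odeg R s a) s.val)
      = (s.filter (fun a => v = odeg R s a)).card := rfl
  rw [this]
  rw [hs, Finset.filter_union,
    Finset.card_union_of_disjoint (Finset.disjoint_filter_filter hd),
    Finset.filter_map, Finset.filter_map, Finset.card_map, Finset.card_map]
  rfl

end TwoPart

section Cores
open scoped Classical
variable {k : ℕ}

def embPr (ε : Fin 2) : ℕ ↪ ℕ × Fin 2 :=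
  ⟨fun j => (j, ε), fun a b h => by simpa using (Prod.ext_iff.mp h).1⟩

/-- the vertex set: all levels in row 0, S-levels in row 1 -/
noncomputable def uSetF (f : Fin k → Bool) (m : ℕ) : Finset (ℕ × Fin 2) :=
  (range m).map (embPr 0) ∪ (SF f).map (embPr 1)

theorem disj_uSetF (f : Fin k → Bool) (m : ℕ) :
    Disjoint ((range m).map (embPr 0)) ((SF f).map (embPr 1)) := by
  rw [Finset.disjoint_left]
  rintro ⟨a, ε⟩ h1 h2
  simp [embPr, Finset.mem_map] at h1 h2
  obtain ⟨_, _, h1⟩ := h1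
  obtain ⟨_, _, h2⟩ := h2
  simp only [DFunLike.coe, Prod.mk.injEq] at h1 h2
  rw [← h1.2] at h2
  exact absurd h2.2 (by decide)

theorem card_uSetF (f : Fin k → Bool) (m : ℕ) : (uSetF f m).card = m + k := by
  rw [uSetF, Finset.card_union_of_disjoint (disj_uSetF f m), Finset.card_map,
    Finset.card_map, Finset.card_range, SF_card]

/-- generic decoding for the `H`/`K` score shape -/
theorem countKH {f : Fin k → Bool} {m : ℕ} (R : ℕ × Fin 2 → ℕ × Fin 2 → Prop)
    (hm : 3*k+6 ≤ m) (i : Fin k)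
    (h0 : ∀ j, j < m → odeg R (uSetF f m) (j, (0:Fin 2)) = m - j - 1 + chiF f j)
    (h1 : ∀ i' : Fin k, m - 1 ≤ odeg R (uSetF f m) (eF f i', (1:Fin 2))) :
    Multiset.count (m - 4 - 3*(i:ℕ)) (scoreM R (uSetF f m)) = if f i then 2 else 0 := by
  have hik := i.2
  rw [uSetF, count_twoPart R _ _ _ _ (disj_uSetF f m), ← uSetF]
  have hz : ((range m).filter fun j => m - 4 - 3*(i:ℕ) = odeg R (uSetF f m) (embPr 0 j))
      = if f i then {3*(i:ℕ)+3, 3*(i:ℕ)+4} else ∅ := by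
    have hrw : ∀ j ∈ range m,
        ((m - 4 - 3*(i:ℕ) = odeg R (uSetF f m) (embPr 0 j)) ↔
          (m - 4 - 3*(i:ℕ) = m - j - 1 + chiF f j)) := by
      intro j hj
      rw [show embPr 0 j = (j, (0:Fin 2)) from rfl, h0 j (Finset.mem_range.mp hj)]
    rw [Finset.filter_congr hrw]
    by_cases hfi : f i
    · rw [if_pos hfi]
      ext x
      simp only [Finset.mem_filter, Finset.mem_range, Finset.mem_insert, Finset.mem_singleton]
      constructor
      · rintro ⟨hxm, heq⟩
        by_cases hx : x ∈ SF f
        · have hc : chiF f x = 1 := by unfold chiF; rw [if_pos hx]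
          omega
        · have hc : chiF f x = 0 := by unfold chiF; rw [if_neg hx]
          omega
      · rintro (rfl | rfl)
        · have hns : (3*(i:ℕ)+3) ∉ SF f := by
            rw [mem_S_3i3]; simp [hfi]
          have hc : chiF f (3*(i:ℕ)+3) = 0 := by unfold chiF; rw [if_neg hns]
          constructor
          · omega
          · rw [hc]; omega
        · have hs : (3*(i:ℕ)+4) ∈ SF f := (mem_S_3i4 i).mpr hfi
          have hc : chiF f (3*(i:ℕ)+4) = 1 := by unfold chiF; rw [if_pos hs]
          constructor
          · omega
          · rw [hc]; omega
    · rw [if_neg hfi]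
      ext x
      simp only [Finset.mem_filter, Finset.mem_range, Finset.notMem_empty, iff_false,
        not_and]
      intro hxm heq
      by_cases hx : x ∈ SF f
      · have hc : chiF f x = 1 := by unfold chiF; rw [if_pos hx]
        have hx4 : x = 3*(i:ℕ)+4 := by omega
        rw [hx4, mem_S_3i4] at hx
        exact hfi hx
      · have hc : chiF f x = 0 := by unfold chiF; rw [if_neg hx]
        have hx3 : x = 3*(i:ℕ)+3 := by omega
        rw [hx3, mem_S_3i3] at hx
        simp at hfi
        exact hx hfi
  have ho : ((SF f).filter fun d => m - 4 - 3*(i:ℕ) = odeg R (uSetF f m) (embPr 1 d)) = ∅ := by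
    rw [Finset.filter_eq_empty_iff]
    intro d hd
    obtain ⟨i', rfl⟩ := mem_SF.mp hd
    have := h1 i'
    rw [show embPr 1 (eF f i') = (eF f i', (1:Fin 2)) from rfl]
    omega
  rw [hz, ho]
  by_cases hfi : f i
  · rw [if_pos hfi, if_pos hfi]
    rw [Finset.card_insert_of_notMem (by simp), Finset.card_singleton, Finset.card_empty]
  · rw [if_neg hfi, if_neg hfi]; simp

theorem decodeKH {m : ℕ} (R : ℕ × Fin 2 → ℕ × Fin 2 → Prop) (hm : 3*k+6 ≤ m)
    (hall : ∀ (g : Fin k → Bool),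
      (∀ j, j < m → odeg R (uSetF g m) (j, (0:Fin 2)) = m - j - 1 + chiF g j) ∧
      (∀ i' : Fin k, m - 1 ≤ odeg R (uSetF g m) (eF g i', (1:Fin 2))))
    (f f' : Fin k → Bool)
    (h : scoreM R (uSetF f m) = scoreM R (uSetF f' m)) : f = f' := by
  funext i
  have c1 := countKH R hm i (hall f).1 (hall f).2
  have c2 := countKH R hm i (hall f').1 (hall f').2
  rw [h] at c1
  rw [c2] at c1
  rcases hf : f i <;> rcases hf' : f' i <;> simp [hf, hf'] at c1 ⊢
end Cores

section KH
open scoped Classical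
variable {k m : ℕ}

theorem K_h0 (f : Fin k → Bool) (j : ℕ) (hj : j < m) :
    odeg (kRel (· < ·)) (uSetF f m) (j, (0:Fin 2)) = m - j - 1 + chiF f j := by
  rw [uSetF, odeg_twoPart _ _ _ _ _ (disj_uSetF f m)]
  have e1 : ((range m).filter fun a => kRel (· < ·) (j, (0:Fin 2)) (embPr 0 a))
      = (range m).filter fun a => j < a :=
    Finset.filter_congr (fun a _ => by simp [embPr, DFunLike.coe, kRel])
  have e2 : ((SF f).filter fun b => kRel (· < ·) (j, (0:Fin 2)) (embPr 1 b))
      = (SF f).filter fun b => b = j :=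
    Finset.filter_congr (fun a _ => by simp [embPr, DFunLike.coe, kRel, eq_comm])
  rw [e1, e2, card_range_filter_gt hj, card_SF_filter_eq]

theorem K_h1 (f : Fin k → Bool) (hm : 3*k+6 ≤ m) (i' : Fin k) :
    m - 1 ≤ odeg (kRel (· < ·)) (uSetF f m) (eF f i', (1:Fin 2)) := by
  have hb : eF f i' < m := lt_of_lt_of_le (eF_lt_bound i') (by omega)
  rw [uSetF, odeg_twoPart _ _ _ _ _ (disj_uSetF f m)]
  have e1 : ((range m).filter fun a => kRel (· < ·) (eF f i', (1:Fin 2)) (embPr 0 a))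
      = (range m).filter fun a => a ≠ eF f i' :=
    Finset.filter_congr (fun a _ => by simp [embPr, DFunLike.coe, kRel])
  rw [e1, card_range_filter_ne hb]
  omega

theorem H_h0 (f : Fin k → Bool) (j : ℕ) (hj : j < m) :
    odeg (hRel (· < ·)) (uSetF f m) (j, (0:Fin 2)) = m - j - 1 + chiF f j := by
  rw [uSetF, odeg_twoPart _ _ _ _ _ (disj_uSetF f m)]
  have e1 : ((range m).filter fun a => hRel (· < ·) (j, (0:Fin 2)) (embPr 0 a))
      = (range m).filter fun a => j < a :=
    Finset.filter_congr (fun a _ => by simp [embPr, DFunLike.coe, hRel])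
  have e2 : ((SF f).filter fun b => hRel (· < ·) (j, (0:Fin 2)) (embPr 1 b))
      = (SF f).filter fun b => b = j :=
    Finset.filter_congr (fun a _ => by simp [embPr, DFunLike.coe, hRel, eq_comm])
  rw [e1, e2, card_range_filter_gt hj, card_SF_filter_eq]

theorem H_h1 (f : Fin k → Bool) (hm : 3*k+6 ≤ m) (i' : Fin k) :
    m - 1 ≤ odeg (hRel (· < ·)) (uSetF f m) (eF f i', (1:Fin 2)) := by
  have hb : eF f i' < m := lt_of_lt_of_le (eF_lt_bound i') (by omega)
  rw [uSetF, odeg_twoPart _ _ _ _ _ (disj_uSetF f m)]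
  have e1 : ((range m).filter fun a => hRel (· < ·) (eF f i', (1:Fin 2)) (embPr 0 a))
      = (range m).filter fun a => a ≠ eF f i' :=
    Finset.filter_congr (fun a _ => by simp [embPr, DFunLike.coe, hRel])
  rw [e1, card_range_filter_ne hb]
  omega

theorem coreK (hm : 3*k+6 ≤ m) (f f' : Fin k → Bool)
    (h : scoreM (kRel (· < ·)) (uSetF f m) = scoreM (kRel (· < ·)) (uSetF f' m)) : f = f' :=
  decodeKH _ hm (fun g => ⟨fun j hj => K_h0 g j hj, K_h1 g hm⟩) f f' h

theorem coreH (hm : 3*k+6 ≤ m) (f f' : Fin k → Bool)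
    (h : scoreM (hRel (· < ·)) (uSetF f m) = scoreM (hRel (· < ·)) (uSetF f' m)) : f = f' :=
  decodeKH _ hm (fun g => ⟨fun j hj => H_h0 g j hj, H_h1 g hm⟩) f f' h

end KH

section TCore
open scoped Classical
variable {k m : ℕ}

theorem cv_one_iff {f : Fin k → Bool} {i : Fin k} : cv f i = 1 ↔ f i = true := by
  unfold cv; rcases h : f i <;> simp

theorem card_SF_filter_eqlt (f : Fin k → Bool) (j : ℕ) :
    ((SF f).filter fun b => j = b ∨ b < j).card = rhoF f j + chiF f j := by
  have hsp : (SF f).filter (fun b => j = b ∨ b < j)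
      = ((SF f).filter (· < j)) ∪ ((SF f).filter (· = j)) := by
    ext x
    simp only [Finset.mem_filter, Finset.mem_union]
    by_cases hx : x ∈ SF f <;> simp [hx] <;> omega
  have hd : Disjoint ((SF f).filter (· < j)) ((SF f).filter (· = j)) := by
    rw [Finset.disjoint_filter]; intro x _ h1 h2; omega
  rw [hsp, Finset.card_union_of_disjoint hd, card_SF_filter_lt, card_SF_filter_eq]

theorem T_h0 (f : Fin k → Bool) (j : ℕ) (hj : j < m) :
    odeg (tRel (· < ·)) (uSetF f m) (j, (0:Fin 2))
      = m - j - 1 + (rhoF f j + chiF f j) := by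
  rw [uSetF, odeg_twoPart _ _ _ _ _ (disj_uSetF f m)]
  have e1 : ((range m).filter fun a => tRel (· < ·) (j, (0:Fin 2)) (embPr 0 a))
      = (range m).filter fun a => j < a :=
    Finset.filter_congr (fun a _ => by simp [embPr, DFunLike.coe, tRel]; try omega)
  have e2 : ((SF f).filter fun b => tRel (· < ·) (j, (0:Fin 2)) (embPr 1 b))
      = (SF f).filter fun b => j = b ∨ b < j :=
    Finset.filter_congr (fun a _ => by simp [embPr, DFunLike.coe, tRel]; try omega)
  rw [e1, e2, card_range_filter_gt hj, card_SF_filter_eqlt]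

theorem T_h1 (f : Fin k → Bool) (hm : 3*k+6 ≤ m) (i' : Fin k) :
    odeg (tRel (· < ·)) (uSetF f m) (eF f i', (1:Fin 2))
      = eF f i' + (k - (i':ℕ) - 1) := by
  have hb : eF f i' < m := lt_of_lt_of_le (eF_lt_bound i') (by omega)
  rw [uSetF, odeg_twoPart _ _ _ _ _ (disj_uSetF f m)]
  have e1 : ((range m).filter fun a => tRel (· < ·) (eF f i', (1:Fin 2)) (embPr 0 a))
      = (range m).filter fun a => a < eF f i' :=
    Finset.filter_congr (fun a _ => by simp [embPr, DFunLike.coe, tRel]; try omega)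
  have e2 : ((SF f).filter fun b => tRel (· < ·) (eF f i', (1:Fin 2)) (embPr 1 b))
      = (SF f).filter fun b => eF f i' < b :=
    Finset.filter_congr (fun a _ => by simp [embPr, DFunLike.coe, tRel]; try omega)
  rw [e1, e2, card_range_filter_lt (le_of_lt hb), card_SF_filter_gt, rho_eF, chi_eF]

theorem countT (f : Fin k → Bool) (hm : 6*k+9 ≤ m) (i : Fin k) :
    Multiset.count (m - 4 - 2*(i:ℕ)) (scoreM (tRel (· < ·)) (uSetF f m))
      = if f i then 2 else 1 := by
  have hik := i.2
  obtain ⟨j0, hj0m, hj0S, hj0w⟩ :=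
    w_surj (f := f) (m := m) (t := 2*(i:ℕ)+3) (by omega) (by omega)
  have hρj0 := rho_le_self f j0
  rw [uSetF, count_twoPart _ _ _ _ _ (disj_uSetF f m), ← uSetF]
  have hrw : ∀ j ∈ range m,
      ((m - 4 - 2*(i:ℕ) = odeg (tRel (· < ·)) (uSetF f m) (embPr 0 j)) ↔
        (m - 4 - 2*(i:ℕ) = m - j - 1 + (rhoF f j + chiF f j))) := by
    intro j hj
    rw [show embPr 0 j = (j, (0:Fin 2)) from rfl, T_h0 f j (Finset.mem_range.mp hj)]
  have hz : ((range m).filter fun j =>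
        m - 4 - 2*(i:ℕ) = odeg (tRel (· < ·)) (uSetF f m) (embPr 0 j))
      = if f i then {j0, eF f i} else {j0} := by
    rw [Finset.filter_congr hrw]
    ext x
    simp only [Finset.mem_filter, Finset.mem_range]
    constructor
    · rintro ⟨hxm, heq⟩
      have hρx := rho_le_self f x
      have hρk := rho_le f x
      by_cases hx : x ∈ SF f
      · obtain ⟨i', rfl⟩ := mem_SF.mp hx
        have hc' := cv_le_one f i'
        have hi' := i'.2
        rw [rho_eF, chi_eF] at heq
        have hkey : cv f i' = 1 ∧ (i':ℕ) = (i:ℕ) := by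
          unfold eF at heq
          constructor <;> omega
        have : i' = i := Fin.ext hkey.2
        subst this
        rw [if_pos (cv_one_iff.mp hkey.1)]
        simp
      · have hχ : chiF f x = 0 := by unfold chiF; rw [if_neg hx]
        have hwx : x - rhoF f x = 2*(i:ℕ)+3 := by rw [hχ] at heq; omega
        have hxj0 : x = j0 := by
          rcases lt_trichotomy x j0 with h | h | h
          · have := w_lt_w hx h; omega
          · exact h
          · have := w_lt_w hj0S h; omega
        subst hxj0
        split <;> simp
    · intro hmem
      have hj0good : j0 < m ∧ m - 4 - 2*(i:ℕ) = m - j0 - 1 + (rhoF f j0 + chiF f j0) := by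
        have hχ : chiF f j0 = 0 := by unfold chiF; rw [if_neg hj0S]
        refine ⟨hj0m, ?_⟩
        rw [hχ]
        omega
      by_cases hfi : f i
      · rw [if_pos hfi] at hmem
        rcases Finset.mem_insert.mp hmem with rfl | hmem2
        · exact hj0good
        · have hxe : x = eF f i := Finset.mem_singleton.mp hmem2
          subst hxe
          have hcv : cv f i = 1 := cv_one_iff.mpr hfi
          have he : eF f i = 3*(i:ℕ)+4 := by unfold eF; omega
          have hbm : eF f i < m := lt_of_lt_of_le (eF_lt_bound i) (by omega)
          refine ⟨hbm, ?_⟩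
          rw [rho_eF, chi_eF, he]
          omega
      · rw [if_neg hfi] at hmem
        have hxe : x = j0 := Finset.mem_singleton.mp hmem
        subst hxe
        exact hj0good
  have ho : ((SF f).filter fun d =>
        m - 4 - 2*(i:ℕ) = odeg (tRel (· < ·)) (uSetF f m) (embPr 1 d)) = ∅ := by
    rw [Finset.filter_eq_empty_iff]
    intro d hd
    obtain ⟨i'', rfl⟩ := mem_SF.mp hd
    rw [show embPr 1 (eF f i'') = (eF f i'', (1:Fin 2)) from rfl, T_h1 f (by omega) i'']
    have hb := eF_lt_bound (f := f) i''
    have := i''.2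
    omega
  rw [hz, ho]
  by_cases hfi : f i
  · rw [if_pos hfi, if_pos hfi]
    have hne : j0 ≠ eF f i := fun h => hj0S (h ▸ mem_SF.mpr ⟨i, rfl⟩)
    rw [Finset.card_insert_of_notMem (by simpa using hne), Finset.card_singleton,
      Finset.card_empty]
  · rw [if_neg hfi, if_neg hfi, Finset.card_singleton, Finset.card_empty]

theorem coreT (hm : 6*k+9 ≤ m) (f f' : Fin k → Bool)
    (h : scoreM (tRel (· < ·)) (uSetF f m) = scoreM (tRel (· < ·)) (uSetF f' m)) : f = f' := by
  funext i
  have c1 := countT f hm i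
  have c2 := countT f' hm i
  rw [h, c2] at c1
  rcases hf : f i <;> rcases hf' : f' i <;> simp [hf, hf'] at c1 ⊢

end TCore

section UCore
open scoped Classical
variable {k m : ℕ}

theorem rho_sub {f : Fin k → Bool} {j j' : ℕ} (h : j ≤ j') :
    rhoF f j' ≤ rhoF f j + (j' - j) := by
  induction j' with
  | zero => simp at h; subst h; omega
  | succ n ih =>
    rcases Nat.lt_or_ge j (n+1) with h1 | h1
    · have := ih (by omega)
      rw [rho_succ]
      have := chiF_le_one f n
      omega
    · have : j = n + 1 := by omega
      subst this; omega

theorem w_bound {f : Fin k → Bool} {i : ℕ} (hi : i < m) (hm : 3*k+3 ≤ m) :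
    i - rhoF f i ≤ m - 1 - k := by
  have h1 : rhoF f (m-1) = k := rho_big (by omega)
  have h2 := rho_sub (f := f) (j := i) (j' := m-1) (by omega)
  have h3 := rho_le_self f i
  omega

theorem card_range_filter_ge {j : ℕ} (h : j < m) :
    ((Finset.range m).filter (fun a => j = a ∨ j < a)).card = m - j := by
  have : (Finset.range m).filter (fun a => j = a ∨ j < a) = Finset.Ico j m := by
    ext x; simp [Finset.mem_filter, Finset.mem_range, Finset.mem_Ico]; omega
  rw [this, Nat.card_Ico]

noncomputable def uSwapF (f : Fin k → Bool) (m : ℕ) : Finset (ℕ × Fin 2) :=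
  (range m).map (embPr 1) ∪ (SF f).map (embPr 0)

theorem disj_uSwapF (f : Fin k → Bool) (m : ℕ) :
    Disjoint ((range m).map (embPr 1)) ((SF f).map (embPr 0)) := by
  rw [Finset.disjoint_left]
  rintro ⟨a, ε⟩ h1 h2
  simp [embPr, Finset.mem_map] at h1 h2
  obtain ⟨_, _, h1⟩ := h1
  obtain ⟨_, _, h2⟩ := h2
  simp only [DFunLike.coe, Prod.mk.injEq] at h1 h2
  rw [← h1.2] at h2
  exact absurd h2.2 (by decide)

theorem card_uSwapF (f : Fin k → Bool) (m : ℕ) : (uSwapF f m).card = m + k := by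
  rw [uSwapF, Finset.card_union_of_disjoint (disj_uSwapF f m), Finset.card_map,
    Finset.card_map, Finset.card_range, SF_card]

theorem U_h1 (f : Fin k → Bool) (i : ℕ) (hi : i < m) :
    odeg (uRel (· < ·)) (uSwapF f m) (i, (1:Fin 2))
      = i + (k - rhoF f i - chiF f i) := by
  rw [uSwapF, odeg_twoPart _ _ _ _ _ (disj_uSwapF f m)]
  have e1 : ((range m).filter fun a => uRel (· < ·) (i, (1:Fin 2)) (embPr 1 a))
      = (range m).filter fun a => a < i :=
    Finset.filter_congr (fun a _ => by simp [embPr, DFunLike.coe, uRel]; try omega)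
  have e2 : ((SF f).filter fun b => uRel (· < ·) (i, (1:Fin 2)) (embPr 0 b))
      = (SF f).filter fun b => i < b :=
    Finset.filter_congr (fun a _ => by simp [embPr, DFunLike.coe, uRel]; try omega)
  rw [e1, e2, card_range_filter_lt (le_of_lt hi), card_SF_filter_gt]

theorem U_h0 (f : Fin k → Bool) (hm : 3*k+6 ≤ m) (j' : Fin k) :
    odeg (uRel (· < ·)) (uSwapF f m) (eF f j', (0:Fin 2))
      = (m - eF f j') + (k - (j':ℕ) - 1) := by
  have hb : eF f j' < m := lt_of_lt_of_le (eF_lt_bound j') (by omega)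
  rw [uSwapF, odeg_twoPart _ _ _ _ _ (disj_uSwapF f m)]
  have e1 : ((range m).filter fun a => uRel (· < ·) (eF f j', (0:Fin 2)) (embPr 1 a))
      = (range m).filter fun a => eF f j' = a ∨ eF f j' < a :=
    Finset.filter_congr (fun a _ => by simp [embPr, DFunLike.coe, uRel]; try omega)
  have e2 : ((SF f).filter fun b => uRel (· < ·) (eF f j', (0:Fin 2)) (embPr 0 b))
      = (SF f).filter fun b => eF f j' < b :=
    Finset.filter_congr (fun a _ => by simp [embPr, DFunLike.coe, uRel]; try omega)
  rw [e1, e2, card_range_filter_ge hb, card_SF_filter_gt, rho_eF, chi_eF]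

theorem countU (f : Fin k → Bool) (hm : 6*k+9 ≤ m) (j : Fin k) :
    Multiset.count (m + k - 5 - 4*(j:ℕ)) (scoreM (uRel (· < ·)) (uSwapF f m))
      = (if k ≤ 4*(j:ℕ)+4 then 1 else 0) + (if f j then 1 else 0) := by
  have hjk := j.2
  rw [uSwapF, count_twoPart _ _ _ _ _ (disj_uSwapF f m), ← uSwapF]
  have hrw : ∀ x ∈ range m,
      ((m + k - 5 - 4*(j:ℕ) = odeg (uRel (· < ·)) (uSwapF f m) (embPr 1 x)) ↔
        (m + k - 5 - 4*(j:ℕ) = x + (k - rhoF f x - chiF f x))) := by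
    intro x hx
    rw [show embPr 1 x = (x, (1:Fin 2)) from rfl, U_h1 f x (Finset.mem_range.mp hx)]
  have hzrw : ∀ d ∈ SF f,
      ((m + k - 5 - 4*(j:ℕ) = odeg (uRel (· < ·)) (uSwapF f m) (embPr 0 d)) ↔
        (m + k - 5 - 4*(j:ℕ) = (m - d) + (k - rhoF f d - 1))) := by
    intro d hd
    obtain ⟨j'', rfl⟩ := mem_SF.mp hd
    rw [show embPr 0 (eF f j'') = (eF f j'', (0:Fin 2)) from rfl, U_h0 f (by omega) j'', rho_eF]
  -- zeros part
  have hz : ((SF f).filter fun d =>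
        m + k - 5 - 4*(j:ℕ) = odeg (uRel (· < ·)) (uSwapF f m) (embPr 0 d))
      = if f j then {eF f j} else ∅ := by
    rw [Finset.filter_congr hzrw]
    ext x
    simp only [Finset.mem_filter]
    constructor
    · rintro ⟨hx, heq⟩
      obtain ⟨j'', rfl⟩ := mem_SF.mp hx
      rw [rho_eF] at heq
      have hc'' := cv_le_one f j''
      have hj'' := j''.2
      have hkey : cv f j'' = 1 ∧ (j'':ℕ) = (j:ℕ) := by
        unfold eF at heq
        constructor <;> omega
      have : j'' = j := Fin.ext hkey.2
      subst this
      rw [if_pos (cv_one_iff.mp hkey.1)]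
      simp
    · intro hmem
      by_cases hfj : f j
      · rw [if_pos hfj] at hmem
        have hxe : x = eF f j := Finset.mem_singleton.mp hmem
        subst hxe
        refine ⟨mem_SF.mpr ⟨j, rfl⟩, ?_⟩
        rw [rho_eF]
        have he : eF f j = 3*(j:ℕ)+4 := by
          have := cv_one_iff.mpr hfj
          unfold eF; omega
        rw [he]
        omega
      · rw [if_neg hfj] at hmem
        exact absurd hmem (Finset.notMem_empty x)
  rw [hz]
  by_cases hkj : k ≤ 4*(j:ℕ)+4
  · obtain ⟨i0, hi0m, hi0S, hi0w⟩ :=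
      w_surj (f := f) (m := m) (t := m - 5 - 4*(j:ℕ)) (by omega) (by omega)
    have hρi0 := rho_le_self f i0
    have hρi0k := rho_le f i0
    have hones : ((range m).filter fun x =>
          m + k - 5 - 4*(j:ℕ) = odeg (uRel (· < ·)) (uSwapF f m) (embPr 1 x))
        = {i0} := by
      rw [Finset.filter_congr hrw]
      ext x
      simp only [Finset.mem_filter, Finset.mem_range, Finset.mem_singleton]
      constructor
      · rintro ⟨hxm, heq⟩
        have hρx := rho_le_self f x
        have hρxk := rho_le f x
        by_cases hx : x ∈ SF f
        · exfalso
          obtain ⟨j'', rfl⟩ := mem_SF.mp hx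
          have hχ : chiF f (eF f j'') = 1 := chi_eF j''
          rw [rho_eF, hχ] at heq
          have hc'' := cv_le_one f j''
          have hj''2 := j''.2
          unfold eF at heq
          omega
        · have hχ : chiF f x = 0 := by unfold chiF; rw [if_neg hx]
          rw [hχ] at heq
          have hwx : x - rhoF f x = m - 5 - 4*(j:ℕ) := by omega
          rcases lt_trichotomy x i0 with h | h | h
          · have := w_lt_w hx h; omega
          · exact h
          · have := w_lt_w hi0S h; omega
      · rintro rfl
        have hχ : chiF f x = 0 := by unfold chiF; rw [if_neg hi0S]
        rw [hχ]
        exact ⟨hi0m, by omega⟩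
    rw [hones, if_pos hkj]
    by_cases hfj : f j
    · rw [if_pos hfj, if_pos hfj]
      simp
    · rw [if_neg hfj, if_neg hfj]
      simp
  · have hones : ((range m).filter fun x =>
          m + k - 5 - 4*(j:ℕ) = odeg (uRel (· < ·)) (uSwapF f m) (embPr 1 x))
        = ∅ := by
      rw [Finset.filter_congr hrw, Finset.filter_eq_empty_iff]
      intro x hx
      have hxm := Finset.mem_range.mp hx
      have hρx := rho_le_self f x
      have hρxk := rho_le f x
      by_cases hxS : x ∈ SF f
      · obtain ⟨j'', rfl⟩ := mem_SF.mp hxS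
        have hχ : chiF f (eF f j'') = 1 := chi_eF j''
        rw [rho_eF, hχ]
        have hc'' := cv_le_one f j''
        have hj''2 := j''.2
        unfold eF
        omega
      · have hχ : chiF f x = 0 := by unfold chiF; rw [if_neg hxS]
        rw [hχ]
        have hwb := w_bound (f := f) hxm (by omega)
        omega
    rw [hones, if_neg hkj]
    by_cases hfj : f j
    · rw [if_pos hfj, if_pos hfj]
      simp
    · rw [if_neg hfj, if_neg hfj]
      simp

theorem coreU (hm : 6*k+9 ≤ m) (f f' : Fin k → Bool)
    (h : scoreM (uRel (· < ·)) (uSwapF f m) = scoreM (uRel (· < ·)) (uSwapF f' m)) : f = f' := by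
  funext j
  have c1 := countU f hm j
  have c2 := countU f' hm j
  rw [h, c2] at c1
  by_cases hkj : k ≤ 4*(j:ℕ)+4 <;>
    rcases hf : f j <;> rcases hf' : f' j <;> simp [hf, hf', hkj] at c1 ⊢

end UCore

section ThreePart
open scoped Classical
universe w1 w2 w3 w4
variable {W : Type w1} {α : Type w2} {β : Type w3} {γ : Type w4} [DecidableEq W]

theorem odeg_threePart (R : W → W → Prop) (A : Finset α) (B : Finset β) (C : Finset γ)
    (gA : α ↪ W) (gB : β ↪ W) (gC : γ ↪ W)
    (hAB : Disjoint (A.map gA) (B.map gB)) (hAC : Disjoint (A.map gA) (C.map gC))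
    (hBC : Disjoint (B.map gB) (C.map gC)) (x : W) :
    odeg R (A.map gA ∪ B.map gB ∪ C.map gC) x
      = (A.filter fun a => R x (gA a)).card + (B.filter fun b => R x (gB b)).card
        + (C.filter fun c => R x (gC c)).card := by
  unfold odeg
  rw [Finset.filter_union, Finset.filter_union]
  rw [Finset.card_union_of_disjoint (Finset.disjoint_union_left.mpr
    ⟨Finset.disjoint_filter_filter hAC, Finset.disjoint_filter_filter hBC⟩)]
  rw [Finset.card_union_of_disjoint (Finset.disjoint_filter_filter hAB)]
  rw [Finset.filter_map, Finset.filter_map, Finset.filter_map,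
    Finset.card_map, Finset.card_map, Finset.card_map]
  rfl

theorem count_threePart (R : W → W → Prop) (A : Finset α) (B : Finset β) (C : Finset γ)
    (gA : α ↪ W) (gB : β ↪ W) (gC : γ ↪ W)
    (hAB : Disjoint (A.map gA) (B.map gB)) (hAC : Disjoint (A.map gA) (C.map gC))
    (hBC : Disjoint (B.map gB) (C.map gC)) (v : ℕ) :
    Multiset.count v (scoreM R (A.map gA ∪ B.map gB ∪ C.map gC))
      = (A.filter fun a => v = odeg R (A.map gA ∪ B.map gB ∪ C.map gC) (gA a)).card
        + (B.filter fun b => v = odeg R (A.map gA ∪ B.map gB ∪ C.map gC) (gB b)).card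
        + (C.filter fun c => v = odeg R (A.map gA ∪ B.map gB ∪ C.map gC) (gC c)).card := by
  set s := A.map gA ∪ B.map gB ∪ C.map gC with hs
  rw [scoreM, Multiset.count_map]
  have : Multiset.card (Multiset.filter (fun a => v = odeg R s a) s.val)
      = (s.filter (fun a => v = odeg R s a)).card := rfl
  rw [this]
  conv_lhs => rw [hs]
  rw [Finset.filter_union, Finset.filter_union]
  rw [Finset.card_union_of_disjoint (Finset.disjoint_union_left.mpr
    ⟨Finset.disjoint_filter_filter hAC, Finset.disjoint_filter_filter hBC⟩)]
  rw [Finset.card_union_of_disjoint (Finset.disjoint_filter_filter hAB)]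
  rw [Finset.filter_map, Finset.filter_map, Finset.filter_map,
    Finset.card_map, Finset.card_map, Finset.card_map]
  rfl

end ThreePart

section C3Core
open scoped Classical
variable {k m : ℕ}

def emb3 (ε : Fin 3) : ℕ ↪ ℕ × Fin 3 :=
  ⟨fun j => (j, ε), fun a b h => by simpa using (Prod.ext_iff.mp h).1⟩

noncomputable def uC3 (f : Fin k → Bool) (m : ℕ) : Finset (ℕ × Fin 3) :=
  (range m).map (emb3 0) ∪ (SF f).map (emb3 1) ∪ (SF f).map (emb3 2)

theorem disj_emb3 {ε ε' : Fin 3} (h : ε ≠ ε') (A B : Finset ℕ) :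
    Disjoint (A.map (emb3 ε)) (B.map (emb3 ε')) := by
  rw [Finset.disjoint_left]
  rintro ⟨a, δ⟩ h1 h2
  simp [emb3, Finset.mem_map] at h1 h2
  obtain ⟨_, _, h1⟩ := h1
  obtain ⟨_, _, h2⟩ := h2
  simp only [DFunLike.coe, Prod.mk.injEq] at h1 h2
  rw [← h1.2] at h2
  exact h (h2.2.symm ▸ rfl)

theorem card_uC3 (f : Fin k → Bool) (m : ℕ) : (uC3 f m).card = m + 2*k := by
  rw [uC3,
    Finset.card_union_of_disjoint (Finset.disjoint_union_left.mpr
      ⟨disj_emb3 (by decide) _ _, disj_emb3 (by decide) _ _⟩),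
    Finset.card_union_of_disjoint (disj_emb3 (by decide) _ _),
    Finset.card_map, Finset.card_map, Finset.card_map, Finset.card_range, SF_card]
  ring

theorem card_SF_filter_gte (f : Fin k → Bool) (j : ℕ) :
    ((SF f).filter fun b => j < b ∨ j = b).card = k - rhoF f j := by
  have hsp : (SF f).filter (fun b => j < b ∨ j = b)
      = ((SF f).filter (fun x => j < x)) ∪ ((SF f).filter (fun x => x = j)) := by
    ext x
    simp only [Finset.mem_filter, Finset.mem_union]
    by_cases hx : x ∈ SF f <;> simp [hx] <;> omega
  have hd : Disjoint ((SF f).filter (fun x => j < x)) ((SF f).filter (fun x => x = j)) := by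
    rw [Finset.disjoint_filter]; intro x _ h1 h2; omega
  rw [hsp, Finset.card_union_of_disjoint hd, card_SF_filter_gt, card_SF_filter_eq]
  have h1 : rhoF f j + chiF f j ≤ k := by
    have := rho_succ f j
    have := rho_le f (j+1)
    omega
  omega

theorem C3_h0 (f : Fin k → Bool) (j : ℕ) (hj : j < m) :
    odeg (c3Rel (· < ·)) (uC3 f m) (j, (0:Fin 3))
      = (m - j - 1) + (k - rhoF f j) + (k - rhoF f j - chiF f j) := by
  rw [uC3, odeg_threePart _ _ _ _ _ _ _ (disj_emb3 (by decide) _ _)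
    (disj_emb3 (by decide) _ _) (disj_emb3 (by decide) _ _)]
  have e1 : ((range m).filter fun a => c3Rel (· < ·) (j, (0:Fin 3)) (emb3 0 a))
      = (range m).filter fun a => j < a :=
    Finset.filter_congr (fun a _ => by simp [emb3, DFunLike.coe, c3Rel]; try omega)
  have e2 : ((SF f).filter fun b => c3Rel (· < ·) (j, (0:Fin 3)) (emb3 1 b))
      = (SF f).filter fun b => j < b ∨ j = b :=
    Finset.filter_congr (fun a _ => by simp [emb3, DFunLike.coe, c3Rel]; try omega)
  have e3 : ((SF f).filter fun b => c3Rel (· < ·) (j, (0:Fin 3)) (emb3 2 b))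
      = (SF f).filter fun b => j < b :=
    Finset.filter_congr (fun a _ => by simp [emb3, DFunLike.coe, c3Rel]; try omega)
  rw [e1, e2, e3, card_range_filter_gt hj, card_SF_filter_gte, card_SF_filter_gt]

theorem C3_h1 (f : Fin k → Bool) (hm : 3*k+6 ≤ m) (i' : Fin k) :
    odeg (c3Rel (· < ·)) (uC3 f m) (eF f i', (1:Fin 3))
      = (m - eF f i' - 1) + (k - (i':ℕ) - 1) + (k - (i':ℕ)) := by
  have hb : eF f i' < m := lt_of_lt_of_le (eF_lt_bound i') (by omega)
  rw [uC3, odeg_threePart _ _ _ _ _ _ _ (disj_emb3 (by decide) _ _)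
    (disj_emb3 (by decide) _ _) (disj_emb3 (by decide) _ _)]
  have e1 : ((range m).filter fun a => c3Rel (· < ·) (eF f i', (1:Fin 3)) (emb3 0 a))
      = (range m).filter fun a => eF f i' < a :=
    Finset.filter_congr (fun a _ => by simp [emb3, DFunLike.coe, c3Rel]; try omega)
  have e2 : ((SF f).filter fun b => c3Rel (· < ·) (eF f i', (1:Fin 3)) (emb3 1 b))
      = (SF f).filter fun b => eF f i' < b :=
    Finset.filter_congr (fun a _ => by simp [emb3, DFunLike.coe, c3Rel]; try omega)
  have e3 : ((SF f).filter fun b => c3Rel (· < ·) (eF f i', (1:Fin 3)) (emb3 2 b))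
      = (SF f).filter fun b => eF f i' < b ∨ eF f i' = b :=
    Finset.filter_congr (fun a _ => by simp [emb3, DFunLike.coe, c3Rel]; try omega)
  rw [e1, e2, e3, card_range_filter_gt hb, card_SF_filter_gte, card_SF_filter_gt,
    rho_eF, chi_eF]

theorem C3_h2 (f : Fin k → Bool) (hm : 3*k+6 ≤ m) (i' : Fin k) :
    odeg (c3Rel (· < ·)) (uC3 f m) (eF f i', (2:Fin 3))
      = (m - eF f i') + (k - (i':ℕ) - 1) + (k - (i':ℕ) - 1) := by
  have hb : eF f i' < m := lt_of_lt_of_le (eF_lt_bound i') (by omega)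
  rw [uC3, odeg_threePart _ _ _ _ _ _ _ (disj_emb3 (by decide) _ _)
    (disj_emb3 (by decide) _ _) (disj_emb3 (by decide) _ _)]
  have e1 : ((range m).filter fun a => c3Rel (· < ·) (eF f i', (2:Fin 3)) (emb3 0 a))
      = (range m).filter fun a => eF f i' = a ∨ eF f i' < a :=
    Finset.filter_congr (fun a _ => by simp [emb3, DFunLike.coe, c3Rel]; try omega)
  have e2 : ((SF f).filter fun b => c3Rel (· < ·) (eF f i', (2:Fin 3)) (emb3 1 b))
      = (SF f).filter fun b => eF f i' < b :=
    Finset.filter_congr (fun a _ => by simp [emb3, DFunLike.coe, c3Rel]; try omega)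
  have e3 : ((SF f).filter fun b => c3Rel (· < ·) (eF f i', (2:Fin 3)) (emb3 2 b))
      = (SF f).filter fun b => eF f i' < b :=
    Finset.filter_congr (fun a _ => by simp [emb3, DFunLike.coe, c3Rel]; try omega)
  rw [e1, e2, e3, card_range_filter_ge hb, card_SF_filter_gt, rho_eF, chi_eF]

theorem countC3 (f : Fin k → Bool) (hm : 6*k+9 ≤ m) (i : Fin k) :
    (f i = true → 2 ≤ Multiset.count (m + 2*k - 6 - 5*(i:ℕ))
      (scoreM (c3Rel (· < ·)) (uC3 f m)))
    ∧ (f i = false → Multiset.count (m + 2*k - 6 - 5*(i:ℕ))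
      (scoreM (c3Rel (· < ·)) (uC3 f m)) ≤ 1) := by
  have hik := i.2
  rw [uC3, count_threePart _ _ _ _ _ _ _ (disj_emb3 (by decide) _ _)
    (disj_emb3 (by decide) _ _) (disj_emb3 (by decide) _ _), ← uC3]
  set v := m + 2*k - 6 - 5*(i:ℕ) with hv
  have hSval : ∀ i'' : Fin k, ((v = (m - eF f i'' - 1) + (k - (i'':ℕ) - 1) + (k - (i'':ℕ)))
      ↔ (i'' = i ∧ f i = true)) := by
    intro i''
    have hc'' := cv_le_one f i''
    have hi'' := i''.2
    constructor
    · intro heq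
      have hkey : cv f i'' = 1 ∧ (i'':ℕ) = (i:ℕ) := by
        rw [hv] at heq
        unfold eF at heq
        constructor <;> omega
      have : i'' = i := Fin.ext hkey.2
      subst this
      exact ⟨rfl, cv_one_iff.mp hkey.1⟩
    · rintro ⟨rfl, hfi⟩
      have he : eF f i'' = 3*(i'':ℕ)+4 := by
        have := cv_one_iff.mpr hfi
        unfold eF; omega
      rw [he, hv]
      omega
  have hSval2 : ∀ i'' : Fin k, ((v = (m - eF f i'') + (k - (i'':ℕ) - 1) + (k - (i'':ℕ) - 1))
      ↔ (i'' = i ∧ f i = true)) := by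
    intro i''
    have hc'' := cv_le_one f i''
    have hi'' := i''.2
    have hb := eF_lt_bound (f := f) i''
    have : (m - eF f i'') + (k - (i'':ℕ) - 1) + (k - (i'':ℕ) - 1)
        = (m - eF f i'' - 1) + (k - (i'':ℕ) - 1) + (k - (i'':ℕ)) := by
      unfold eF at hb ⊢
      omega
    rw [this]
    exact hSval i''
  have hrow1 : ((SF f).filter fun b => v = odeg (c3Rel (· < ·)) (uC3 f m) (emb3 1 b))
      = if f i then {eF f i} else ∅ := by
    have hrw : ∀ b ∈ SF f, ((v = odeg (c3Rel (· < ·)) (uC3 f m) (emb3 1 b))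
        ↔ (∃ i'' : Fin k, eF f i'' = b ∧ i'' = i ∧ f i = true)) := by
      intro b hb
      obtain ⟨i'', rfl⟩ := mem_SF.mp hb
      rw [show emb3 1 (eF f i'') = (eF f i'', (1:Fin 3)) from rfl, C3_h1 f (by omega) i'',
        hSval i'']
      constructor
      · rintro ⟨h1, h2⟩; exact ⟨i'', rfl, h1, h2⟩
      · rintro ⟨i3, h3, h4, h5⟩
        have : i3 = i'' := eF_inj h3
        subst this
        exact ⟨h4, h5⟩
    rw [Finset.filter_congr hrw]
    by_cases hfi : f i
    · rw [if_pos hfi]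
      ext x
      simp only [Finset.mem_filter, Finset.mem_singleton]
      constructor
      · rintro ⟨hx, i3, h3, rfl, _⟩; exact h3.symm
      · rintro rfl
        exact ⟨mem_SF.mpr ⟨i, rfl⟩, i, rfl, rfl, hfi⟩
    · rw [if_neg hfi]
      ext x
      simp only [Finset.mem_filter, Finset.notMem_empty, iff_false, not_and]
      rintro hx ⟨i3, h3, rfl, h5⟩
      exact hfi h5
  have hrow2 : ((SF f).filter fun b => v = odeg (c3Rel (· < ·)) (uC3 f m) (emb3 2 b))
      = if f i then {eF f i} else ∅ := by
    have hrw : ∀ b ∈ SF f, ((v = odeg (c3Rel (· < ·)) (uC3 f m) (emb3 2 b))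
        ↔ (∃ i'' : Fin k, eF f i'' = b ∧ i'' = i ∧ f i = true)) := by
      intro b hb
      obtain ⟨i'', rfl⟩ := mem_SF.mp hb
      rw [show emb3 2 (eF f i'') = (eF f i'', (2:Fin 3)) from rfl, C3_h2 f (by omega) i'',
        hSval2 i'']
      constructor
      · rintro ⟨h1, h2⟩; exact ⟨i'', rfl, h1, h2⟩
      · rintro ⟨i3, h3, h4, h5⟩
        have : i3 = i'' := eF_inj h3
        subst this
        exact ⟨h4, h5⟩
    rw [Finset.filter_congr hrw]
    by_cases hfi : f i
    · rw [if_pos hfi]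
      ext x
      simp only [Finset.mem_filter, Finset.mem_singleton]
      constructor
      · rintro ⟨hx, i3, h3, rfl, _⟩; exact h3.symm
      · rintro rfl
        exact ⟨mem_SF.mpr ⟨i, rfl⟩, i, rfl, rfl, hfi⟩
    · rw [if_neg hfi]
      ext x
      simp only [Finset.mem_filter, Finset.notMem_empty, iff_false, not_and]
      rintro hx ⟨i3, h3, rfl, h5⟩
      exact hfi h5
  rw [hrow1, hrow2]
  constructor
  · intro hfi
    rw [if_pos hfi, Finset.card_singleton]
    omega
  · intro hfi
    rw [if_neg (show ¬ (f i = true) by simp [hfi]), Finset.card_empty]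
    have hrow0 : ((range m).filter fun a =>
        v = odeg (c3Rel (· < ·)) (uC3 f m) (emb3 0 a)).card ≤ 1 := by
      apply Finset.card_le_one.mpr
      intro a ha b hb
      simp only [Finset.mem_filter, Finset.mem_range] at ha hb
      obtain ⟨ham, haeq⟩ := ha
      obtain ⟨hbm, hbeq⟩ := hb
      rw [show emb3 0 a = (a, (0:Fin 3)) from rfl, C3_h0 f a ham] at haeq
      rw [show emb3 0 b = (b, (0:Fin 3)) from rfl, C3_h0 f b hbm] at hbeq
      have hanS : a ∉ SF f := by
        intro hs
        obtain ⟨i'', rfl⟩ := mem_SF.mp hs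
        rw [rho_eF, chi_eF] at haeq
        have : (v = (m - eF f i'' - 1) + (k - (i'':ℕ) - 1) + (k - (i'':ℕ))) := by
          have hb3 := eF_lt_bound (f := f) i''
          have hi'' := i''.2
          omega
        rw [hSval i''] at this
        rw [this.2] at hfi
        simp at hfi
      have hbnS : b ∉ SF f := by
        intro hs
        obtain ⟨i'', rfl⟩ := mem_SF.mp hs
        rw [rho_eF, chi_eF] at hbeq
        have : (v = (m - eF f i'' - 1) + (k - (i'':ℕ) - 1) + (k - (i'':ℕ))) := by
          have hb3 := eF_lt_bound (f := f) i''
          have hi'' := i''.2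
          omega
        rw [hSval i''] at this
        rw [this.2] at hfi
        simp at hfi
      have hca : chiF f a = 0 := by unfold chiF; rw [if_neg hanS]
      have hcb : chiF f b = 0 := by unfold chiF; rw [if_neg hbnS]
      rw [hca] at haeq
      rw [hcb] at hbeq
      have hra := rho_le f a
      have hrb := rho_le f b
      have hga : a + 2 * rhoF f a = b + 2 * rhoF f b := by omega
      rcases lt_trichotomy a b with h | h | h
      · have := rho_mono (f := f) (le_of_lt h); omega
      · exact h
      · have := rho_mono (f := f) (le_of_lt h); omega
    omega

theorem coreC3 (hm : 6*k+9 ≤ m) (f f' : Fin k → Bool)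
    (h : scoreM (c3Rel (· < ·)) (uC3 f m) = scoreM (c3Rel (· < ·)) (uC3 f' m)) : f = f' := by
  funext i
  have c1 := countC3 f hm i
  have c2 := countC3 f' hm i
  rw [h] at c1
  rcases hf : f i <;> rcases hf' : f' i
  · rfl
  · have := c1.2 hf; have := c2.1 hf'; omega
  · have := c1.1 hf; have := c2.2 hf'; omega
  · rfl

end C3Core

section VCore
open scoped Classical
variable {k m : ℕ}

theorem odeg_insertTwoPart {W : Type} {α β : Type} [DecidableEq W]
    (R : W → W → Prop) (x0 : W) (A : Finset α) (B : Finset β)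
    (gA : α ↪ W) (gB : β ↪ W) (hd : Disjoint (A.map gA) (B.map gB))
    (h0 : x0 ∉ A.map gA ∪ B.map gB) (y : W) :
    odeg R (insert x0 (A.map gA ∪ B.map gB)) y
      = (if R y x0 then 1 else 0)
        + ((A.filter fun a => R y (gA a)).card + (B.filter fun b => R y (gB b)).card) := by
  unfold odeg
  rw [Finset.filter_insert]
  have hbase : ((A.map gA ∪ B.map gB).filter (fun z => R y z)).card
      = (A.filter fun a => R y (gA a)).card + (B.filter fun b => R y (gB b)).card := by
    rw [Finset.filter_union,
      Finset.card_union_of_disjoint (Finset.disjoint_filter_filter hd),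
      Finset.filter_map, Finset.filter_map, Finset.card_map, Finset.card_map]
    rfl
  split
  · rw [Finset.card_insert_of_notMem (fun hc => h0 (Finset.mem_of_mem_filter _ hc)), hbase]
    omega
  · rw [hbase]; omega

theorem count_insertTwoPart {W : Type} {α β : Type} [DecidableEq W]
    (R : W → W → Prop) (x0 : W) (A : Finset α) (B : Finset β)
    (gA : α ↪ W) (gB : β ↪ W) (hd : Disjoint (A.map gA) (B.map gB))
    (h0 : x0 ∉ A.map gA ∪ B.map gB) (v : ℕ) :
    Multiset.count v (scoreM R (insert x0 (A.map gA ∪ B.map gB)))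
      = (if v = odeg R (insert x0 (A.map gA ∪ B.map gB)) x0 then 1 else 0)
        + ((A.filter fun a => v = odeg R (insert x0 (A.map gA ∪ B.map gB)) (gA a)).card
          + (B.filter fun b => v = odeg R (insert x0 (A.map gA ∪ B.map gB)) (gB b)).card) := by
  set u := insert x0 (A.map gA ∪ B.map gB) with hu
  rw [scoreM]
  have hval : u.val = x0 ::ₘ (A.map gA ∪ B.map gB).val := Finset.insert_val_of_notMem h0
  rw [hval, Multiset.map_cons, Multiset.count_cons]
  have htail : Multiset.count v (Multiset.map (odeg R u) (A.map gA ∪ B.map gB).val)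
      = (A.filter fun a => v = odeg R u (gA a)).card
        + (B.filter fun b => v = odeg R u (gB b)).card := by
    rw [Multiset.count_map]
    have : Multiset.card (Multiset.filter (fun a => v = odeg R u a) (A.map gA ∪ B.map gB).val)
        = ((A.map gA ∪ B.map gB).filter (fun a => v = odeg R u a)).card := rfl
    rw [this, Finset.filter_union,
      Finset.card_union_of_disjoint (Finset.disjoint_filter_filter hd),
      Finset.filter_map, Finset.filter_map, Finset.card_map, Finset.card_map]
    rfl
  rw [htail]
  omega

def embV (ε : Fin 2) : ℕ ↪ Option (ℕ × Fin 2) :=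
  ⟨fun j => some (j, ε), fun a b h => by simpa using (Prod.ext_iff.mp (Option.some_injective _ h)).1⟩

noncomputable def uV (f : Fin k → Bool) (m : ℕ) : Finset (Option (ℕ × Fin 2)) :=
  insert none ((range m).map (embV 0) ∪ (SF f).map (embV 1))

theorem disj_embV (A B : Finset ℕ) :
    Disjoint (A.map (embV 0)) (B.map (embV 1)) := by
  rw [Finset.disjoint_left]
  rintro x h1 h2
  simp [embV, DFunLike.coe, Finset.mem_map] at h1 h2
  obtain ⟨a, _, h1⟩ := h1
  obtain ⟨b, _, h2⟩ := h2
  rw [← h1] at h2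
  have h12 : (1 : Fin 2) = 0 := (Prod.ext_iff.mp (Option.some_injective _ h2)).2
  exact absurd h12 (by decide)

theorem none_notmem_V (f : Fin k → Bool) (m : ℕ) :
    (none : Option (ℕ × Fin 2)) ∉ (range m).map (embV 0) ∪ (SF f).map (embV 1) := by
  intro h
  rcases Finset.mem_union.mp h with h | h <;>
    · obtain ⟨a, _, ha⟩ := Finset.mem_map.mp h
      simp [embV] at ha

theorem card_uV (f : Fin k → Bool) (m : ℕ) : (uV f m).card = m + k + 1 := by
  rw [uV, Finset.card_insert_of_notMem (none_notmem_V f m),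
    Finset.card_union_of_disjoint (disj_embV _ _), Finset.card_map, Finset.card_map,
    Finset.card_range, SF_card]

theorem V_h0 (f : Fin k → Bool) (j : ℕ) (hj : j < m) :
    odeg (vRel (· < ·)) (uV f m) (embV 0 j) = (m - j - 1) + (k - rhoF f j) := by
  rw [uV, odeg_insertTwoPart _ _ _ _ _ _ (disj_embV _ _) (none_notmem_V f m)]
  have e0 : ¬ vRel (· < ·) (embV 0 j) none := by simp [embV, DFunLike.coe, vRel]
  have e1 : ((range m).filter fun a => vRel (· < ·) (embV 0 j) (embV 0 a))
      = (range m).filter fun a => j < a :=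
    Finset.filter_congr (fun a _ => by simp [embV, DFunLike.coe, vRel]; try omega)
  have e2 : ((SF f).filter fun b => vRel (· < ·) (embV 0 j) (embV 1 b))
      = (SF f).filter fun b => j < b ∨ j = b :=
    Finset.filter_congr (fun a _ => by simp [embV, DFunLike.coe, vRel]; try omega)
  rw [if_neg e0, e1, e2, card_range_filter_gt hj, card_SF_filter_gte]
  omega

theorem V_h1 (f : Fin k → Bool) (hm : 3*k+6 ≤ m) (i' : Fin k) :
    odeg (vRel (· < ·)) (uV f m) (embV 1 (eF f i'))
      = 1 + ((m - eF f i' - 1) + (k - (i':ℕ) - 1)) := by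
  have hb : eF f i' < m := lt_of_lt_of_le (eF_lt_bound i') (by omega)
  rw [uV, odeg_insertTwoPart _ _ _ _ _ _ (disj_embV _ _) (none_notmem_V f m)]
  have e0 : vRel (· < ·) (embV 1 (eF f i')) none := by simp [embV, DFunLike.coe, vRel]
  have e1 : ((range m).filter fun a => vRel (· < ·) (embV 1 (eF f i')) (embV 0 a))
      = (range m).filter fun a => eF f i' < a :=
    Finset.filter_congr (fun a _ => by simp [embV, DFunLike.coe, vRel]; try omega)
  have e2 : ((SF f).filter fun b => vRel (· < ·) (embV 1 (eF f i')) (embV 1 b))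
      = (SF f).filter fun b => eF f i' < b :=
    Finset.filter_congr (fun a _ => by simp [embV, DFunLike.coe, vRel]; try omega)
  rw [if_pos e0, e1, e2, card_range_filter_gt hb, card_SF_filter_gt, rho_eF, chi_eF]

theorem countV (f : Fin k → Bool) (hm : 6*k+9 ≤ m) (j : Fin k) :
    (f j = true → 2 ≤ Multiset.count (m + k - 5 - 4*(j:ℕ))
      (scoreM (vRel (· < ·)) (uV f m)))
    ∧ (f j = false → Multiset.count (m + k - 5 - 4*(j:ℕ))
      (scoreM (vRel (· < ·)) (uV f m)) ≤ 1) := by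
  have hjk := j.2
  rw [uV, count_insertTwoPart _ _ _ _ _ _ (disj_embV _ _) (none_notmem_V f m), ← uV]
  set v := m + k - 5 - 4*(j:ℕ) with hv
  have hzrw : ∀ x ∈ range m,
      ((v = odeg (vRel (· < ·)) (uV f m) (embV 0 x)) ↔
        (v = (m - x - 1) + (k - rhoF f x))) := by
    intro x hx
    rw [V_h0 f x (Finset.mem_range.mp hx)]
  have honesrw : ∀ b ∈ SF f,
      ((v = odeg (vRel (· < ·)) (uV f m) (embV 1 b)) ↔
        (∃ i'' : Fin k, eF f i'' = b ∧ i'' = j ∧ f j = true)) := by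
    intro b hb
    obtain ⟨i'', rfl⟩ := mem_SF.mp hb
    rw [V_h1 f (by omega) i'']
    have hc'' := cv_le_one f i''
    have hi'' := i''.2
    have hbnd := eF_lt_bound (f := f) i''
    constructor
    · intro heq
      have hkey : cv f i'' = 1 ∧ (i'':ℕ) = (j:ℕ) := by
        rw [hv] at heq
        unfold eF at heq hbnd
        constructor <;> omega
      have hij : i'' = j := Fin.ext hkey.2
      exact ⟨i'', rfl, hij, hij ▸ cv_one_iff.mp hkey.1⟩
    · rintro ⟨i3, h3, hij, hfj⟩
      have hii : i3 = i'' := eF_inj h3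
      have hft : f i'' = true := by rw [← hii, hij]; exact hfj
      have hnn : (i'':ℕ) = (j:ℕ) := by rw [← hii, hij]
      have he : eF f i'' = 3*(i'':ℕ)+4 := by
        have := cv_one_iff.mpr hft
        unfold eF; omega
      rw [he, hv]
      omega
  have hones : ((SF f).filter fun b => v = odeg (vRel (· < ·)) (uV f m) (embV 1 b))
      = if f j then {eF f j} else ∅ := by
    rw [Finset.filter_congr honesrw]
    by_cases hfj : f j
    · rw [if_pos hfj]
      ext x
      simp only [Finset.mem_filter, Finset.mem_singleton]
      constructor
      · rintro ⟨hx, i3, h3, rfl, _⟩; exact h3.symm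
      · rintro rfl
        exact ⟨mem_SF.mpr ⟨j, rfl⟩, j, rfl, rfl, hfj⟩
    · rw [if_neg hfj]
      ext x
      simp only [Finset.mem_filter, Finset.notMem_empty, iff_false, not_and]
      rintro hx ⟨i3, h3, rfl, h5⟩
      exact hfj h5
  have hzeros : ((range m).filter fun x => v = odeg (vRel (· < ·)) (uV f m) (embV 0 x))
      = if f j then {eF f j} else ∅ := by
    rw [Finset.filter_congr hzrw]
    ext x
    simp only [Finset.mem_filter, Finset.mem_range]
    constructor
    · rintro ⟨hxm, heq⟩
      have hρx := rho_le_self f x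
      have hρxk := rho_le f x
      have hux : x + rhoF f x = 4*(j:ℕ)+4 := by rw [hv] at heq; omega
      by_cases hfj : f j
      · rw [if_pos hfj]
        have hue : eF f j + rhoF f (eF f j) = 4*(j:ℕ)+4 := by
          rw [u_eF]
          have := cv_one_iff.mpr hfj
          omega
        rcases lt_trichotomy x (eF f j) with h | h | h
        · have := u_strictMono (f := f) h; omega
        · simp [h]
        · have := u_strictMono (f := f) h; omega
      · exfalso
        have hfj' : f j = false := by simpa using hfj
        exact u_skip hfj' x hux
    · intro hmem
      by_cases hfj : f j
      · rw [if_pos hfj] at hmem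
        have hxe : x = eF f j := Finset.mem_singleton.mp hmem
        subst hxe
        have hbm : eF f j < m := lt_of_lt_of_le (eF_lt_bound j) (by omega)
        refine ⟨hbm, ?_⟩
        have hue : eF f j + rhoF f (eF f j) = 4*(j:ℕ)+4 := by
          rw [u_eF]
          have := cv_one_iff.mpr hfj
          omega
        have hρ := rho_le f (eF f j)
        rw [hv]
        omega
      · rw [if_neg hfj] at hmem
        exact absurd hmem (Finset.notMem_empty x)
  rw [hzeros, hones]
  constructor
  · intro hfj
    rw [if_pos hfj, Finset.card_singleton]
    omega
  · intro hfj
    rw [if_neg (show ¬ (f j = true) by simp [hfj]), Finset.card_empty]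
    split <;> omega

theorem coreV (hm : 6*k+9 ≤ m) (f f' : Fin k → Bool)
    (h : scoreM (vRel (· < ·)) (uV f m) = scoreM (vRel (· < ·)) (uV f' m)) : f = f' := by
  funext j
  have c1 := countV f hm j
  have c2 := countV f' hm j
  rw [h] at c1
  rcases hf : f j <;> rcases hf' : f' j
  · rfl
  · have := c1.2 hf; have := c2.1 hf'; omega
  · have := c1.1 hf; have := c2.2 hf'; omega
  · rfl

end VCore

section Transfer
open scoped Classical
variable {k m : ℕ}

def prodEmb2 (g : ℕ ↪ ℕ) : ℕ × Fin 2 ↪ ℕ × Fin 2 :=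
  ⟨fun p => (g p.1, p.2), by
    intro p q h
    cases p; cases q
    simp only [Prod.mk.injEq] at h ⊢
    exact ⟨g.injective h.1, h.2⟩⟩

def prodEmb3 (g : ℕ ↪ ℕ) : ℕ × Fin 3 ↪ ℕ × Fin 3 :=
  ⟨fun p => (g p.1, p.2), by
    intro p q h
    cases p; cases q
    simp only [Prod.mk.injEq] at h ⊢
    exact ⟨g.injective h.1, h.2⟩⟩

def optEmb (g : ℕ ↪ ℕ) : Option (ℕ × Fin 2) ↪ Option (ℕ × Fin 2) :=
  ⟨Option.map (fun p => (g p.1, p.2)), by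
    intro p q h
    rcases p with _ | p <;> rcases q with _ | q
    · rfl
    · simp [Option.map] at h
    · simp [Option.map] at h
    · have h' : (g p.1, p.2) = (g q.1, q.2) := by simpa [Option.map] using h
      cases p; cases q
      simp only [Prod.mk.injEq] at h'
      simp only [Option.map, Option.some.injEq, Prod.mk.injEq]
      exact ⟨g.injective h'.1, h'.2⟩⟩

theorem mem_uSetF_bound {f : Fin k → Bool} (hm : 3*k+2 ≤ m) :
    ∀ p ∈ uSetF f m, p.1 < m := by
  intro p hp
  rcases Finset.mem_union.mp hp with h | h <;> obtain ⟨a, ha, rfl⟩ := Finset.mem_map.mp h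
  · exact Finset.mem_range.mp ha
  · obtain ⟨i, rfl⟩ := mem_SF.mp ha
    exact lt_of_lt_of_le (eF_lt_bound i) hm

theorem mem_uSwapF_bound {f : Fin k → Bool} (hm : 3*k+2 ≤ m) :
    ∀ p ∈ uSwapF f m, p.1 < m := by
  intro p hp
  rcases Finset.mem_union.mp hp with h | h <;> obtain ⟨a, ha, rfl⟩ := Finset.mem_map.mp h
  · exact Finset.mem_range.mp ha
  · obtain ⟨i, rfl⟩ := mem_SF.mp ha
    exact lt_of_lt_of_le (eF_lt_bound i) hm

theorem mem_uC3_bound {f : Fin k → Bool} (hm : 3*k+2 ≤ m) :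
    ∀ p ∈ uC3 f m, p.1 < m := by
  intro p hp
  rcases Finset.mem_union.mp hp with h | h
  · rcases Finset.mem_union.mp h with h' | h' <;> obtain ⟨a, ha, rfl⟩ := Finset.mem_map.mp h'
    · exact Finset.mem_range.mp ha
    · obtain ⟨i, rfl⟩ := mem_SF.mp ha
      exact lt_of_lt_of_le (eF_lt_bound i) hm
  · obtain ⟨a, ha, rfl⟩ := Finset.mem_map.mp h
    obtain ⟨i, rfl⟩ := mem_SF.mp ha
    exact lt_of_lt_of_le (eF_lt_bound i) hm

theorem mem_uV_bound {f : Fin k → Bool} (hm : 3*k+2 ≤ m) :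
    ∀ p ∈ uV f m, ∀ q : ℕ × Fin 2, p = some q → q.1 < m := by
  intro p hp q hq
  rw [uV, Finset.mem_insert] at hp
  rcases hp with rfl | hp
  · exact absurd hq (by simp)
  rcases Finset.mem_union.mp hp with h | h <;> obtain ⟨a, ha, he⟩ := Finset.mem_map.mp h
  · rw [← he] at hq
    have : (a, (0:Fin 2)) = q := by simpa [embV, DFunLike.coe] using hq
    rw [← this]
    exact Finset.mem_range.mp ha
  · rw [← he] at hq
    have : (a, (1:Fin 2)) = q := by simpa [embV, DFunLike.coe] using hq
    rw [← this]
    obtain ⟨i, rfl⟩ := mem_SF.mp ha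
    exact lt_of_lt_of_le (eF_lt_bound i) hm

variable {lt : ℕ → ℕ → Prop} {g : ℕ ↪ ℕ}

theorem kRel_transfer (hg : ∀ a b, a < m → b < m → (a < b ↔ lt (g a) (g b)))
    (a b : ℕ × Fin 2) (ha : a.1 < m) (hb : b.1 < m) :
    kRel (· < ·) a b ↔ kRel lt (prodEmb2 g a) (prodEmb2 g b) := by
  have e1 := hg a.1 b.1 ha hb
  have e2 := hg b.1 a.1 hb ha
  have e3 : a.1 = b.1 ↔ g a.1 = g b.1 := ⟨fun h => by rw [h], fun h => g.injective h⟩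
  show kRel (· < ·) a b ↔ kRel lt (g a.1, a.2) (g b.1, b.2)
  simp only [kRel]
  rw [← e1, ← e2, ← e3]

theorem hRel_transfer (hg : ∀ a b, a < m → b < m → (a < b ↔ lt (g a) (g b)))
    (a b : ℕ × Fin 2) (ha : a.1 < m) (hb : b.1 < m) :
    hRel (· < ·) a b ↔ hRel lt (prodEmb2 g a) (prodEmb2 g b) := by
  have e1 := hg a.1 b.1 ha hb
  have e2 := hg b.1 a.1 hb ha
  have e3 : a.1 = b.1 ↔ g a.1 = g b.1 := ⟨fun h => by rw [h], fun h => g.injective h⟩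
  show hRel (· < ·) a b ↔ hRel lt (g a.1, a.2) (g b.1, b.2)
  simp only [hRel]
  rw [← e1, ← e2, ← e3]

theorem tRel_transfer (hg : ∀ a b, a < m → b < m → (a < b ↔ lt (g a) (g b)))
    (a b : ℕ × Fin 2) (ha : a.1 < m) (hb : b.1 < m) :
    tRel (· < ·) a b ↔ tRel lt (prodEmb2 g a) (prodEmb2 g b) := by
  have e1 := hg a.1 b.1 ha hb
  have e2 := hg b.1 a.1 hb ha
  have e3 : a.1 = b.1 ↔ g a.1 = g b.1 := ⟨fun h => by rw [h], fun h => g.injective h⟩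
  show tRel (· < ·) a b ↔ tRel lt (g a.1, a.2) (g b.1, b.2)
  simp only [tRel]
  rw [← e1, ← e2, ← e3]

theorem uRel_transfer (hg : ∀ a b, a < m → b < m → (a < b ↔ lt (g a) (g b)))
    (a b : ℕ × Fin 2) (ha : a.1 < m) (hb : b.1 < m) :
    uRel (· < ·) a b ↔ uRel lt (prodEmb2 g a) (prodEmb2 g b) := by
  have e1 := hg a.1 b.1 ha hb
  have e2 := hg b.1 a.1 hb ha
  have e3 : a.1 = b.1 ↔ g a.1 = g b.1 := ⟨fun h => by rw [h], fun h => g.injective h⟩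
  show uRel (· < ·) a b ↔ uRel lt (g a.1, a.2) (g b.1, b.2)
  simp only [uRel]
  rw [← e1, ← e2, ← e3]

theorem c3Rel_transfer (hg : ∀ a b, a < m → b < m → (a < b ↔ lt (g a) (g b)))
    (a b : ℕ × Fin 3) (ha : a.1 < m) (hb : b.1 < m) :
    c3Rel (· < ·) a b ↔ c3Rel lt (prodEmb3 g a) (prodEmb3 g b) := by
  have e1 := hg a.1 b.1 ha hb
  have e3 : a.1 = b.1 ↔ g a.1 = g b.1 := ⟨fun h => by rw [h], fun h => g.injective h⟩
  show c3Rel (· < ·) a b ↔ c3Rel lt (g a.1, a.2) (g b.1, b.2)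
  simp only [c3Rel]
  rw [← e1, ← e3]

theorem vRel_transfer (hg : ∀ a b, a < m → b < m → (a < b ↔ lt (g a) (g b)))
    (a b : Option (ℕ × Fin 2)) (ha : ∀ q : ℕ × Fin 2, a = some q → q.1 < m)
    (hb : ∀ q : ℕ × Fin 2, b = some q → q.1 < m) :
    vRel (· < ·) a b ↔ vRel lt (optEmb g a) (optEmb g b) := by
  rcases a with _ | p <;> rcases b with _ | q
  · simp [vRel, optEmb, DFunLike.coe, -Function.Embedding.toFun_eq_coe]
  · show vRel (· < ·) none (some q) ↔ vRel lt none (some (g q.1, q.2))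
    simp [vRel]
  · show vRel (· < ·) (some p) none ↔ vRel lt (some (g p.1, p.2)) none
    simp [vRel]
  · show vRel (· < ·) (some p) (some q) ↔ vRel lt (some (g p.1, p.2)) (some (g q.1, q.2))
    have e1 := hg p.1 q.1 (ha p rfl) (hb q rfl)
    have e3 : p.1 = q.1 ↔ g p.1 = g q.1 := ⟨fun h => by rw [h], fun h => g.injective h⟩
    simp only [vRel]
    rw [← e1, ← e3]

end Transfer

section ProfileBounds
open scoped Classical

/-- arbitrarily long chains in `lt` -/
def HasChains (lt : ℕ → ℕ → Prop) : Prop :=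
  ∀ m, ∃ g : ℕ ↪ ℕ, ∀ a b, a < m → b < m → (a < b ↔ lt (g a) (g b))

theorem chains_omega : HasChains (fun a b => a < b) :=
  fun _ => ⟨Function.Embedding.refl ℕ, fun _ _ _ _ => Iff.rfl⟩

theorem chains_omegaStar : HasChains (fun a b => b < a) := by
  intro m
  refine ⟨⟨fun i => if i < m then m - 1 - i else i + m, ?_⟩, ?_⟩
  · intro x y h
    by_cases hx : x < m <;> by_cases hy : y < m <;> simp [hx, hy] at h <;> omega
  · intro a b ha hb
    simp [DFunLike.coe, ha, hb]
    omega

theorem profK {lt : ℕ → ℕ → Prop} (hc : HasChains lt) {n k m : ℕ}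
    (hm : 3*k+6 ≤ m) (hn : n = m + k) : 2^k ≤ profile (kRel lt) n := by
  obtain ⟨g, hg⟩ := hc m
  apply profile_ge_pow (kRel lt) n k (fun f => (uSetF f m).map (prodEmb2 g))
  · intro f; rw [Finset.card_map, card_uSetF, hn]
  · intro f f' hsc
    refine coreK hm f f' ?_
    have t1 := scoreM_map (kRel lt) (kRel (· < ·)) (uSetF f m) (prodEmb2 g)
      (fun a ha b hb => kRel_transfer hg a b
        (mem_uSetF_bound (by omega) a ha) (mem_uSetF_bound (by omega) b hb))
    have t2 := scoreM_map (kRel lt) (kRel (· < ·)) (uSetF f' m) (prodEmb2 g)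
      (fun a ha b hb => kRel_transfer hg a b
        (mem_uSetF_bound (by omega) a ha) (mem_uSetF_bound (by omega) b hb))
    rw [← t1, ← t2]
    exact hsc

theorem profH {lt : ℕ → ℕ → Prop} (hc : HasChains lt) {n k m : ℕ}
    (hm : 3*k+6 ≤ m) (hn : n = m + k) : 2^k ≤ profile (hRel lt) n := by
  obtain ⟨g, hg⟩ := hc m
  apply profile_ge_pow (hRel lt) n k (fun f => (uSetF f m).map (prodEmb2 g))
  · intro f; rw [Finset.card_map, card_uSetF, hn]
  · intro f f' hsc
    refine coreH hm f f' ?_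
    have t1 := scoreM_map (hRel lt) (hRel (· < ·)) (uSetF f m) (prodEmb2 g)
      (fun a ha b hb => hRel_transfer hg a b
        (mem_uSetF_bound (by omega) a ha) (mem_uSetF_bound (by omega) b hb))
    have t2 := scoreM_map (hRel lt) (hRel (· < ·)) (uSetF f' m) (prodEmb2 g)
      (fun a ha b hb => hRel_transfer hg a b
        (mem_uSetF_bound (by omega) a ha) (mem_uSetF_bound (by omega) b hb))
    rw [← t1, ← t2]
    exact hsc

theorem profT {lt : ℕ → ℕ → Prop} (hc : HasChains lt) {n k m : ℕ}
    (hm : 6*k+9 ≤ m) (hn : n = m + k) : 2^k ≤ profile (tRel lt) n := by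
  obtain ⟨g, hg⟩ := hc m
  apply profile_ge_pow (tRel lt) n k (fun f => (uSetF f m).map (prodEmb2 g))
  · intro f; rw [Finset.card_map, card_uSetF, hn]
  · intro f f' hsc
    refine coreT hm f f' ?_
    have t1 := scoreM_map (tRel lt) (tRel (· < ·)) (uSetF f m) (prodEmb2 g)
      (fun a ha b hb => tRel_transfer hg a b
        (mem_uSetF_bound (by omega) a ha) (mem_uSetF_bound (by omega) b hb))
    have t2 := scoreM_map (tRel lt) (tRel (· < ·)) (uSetF f' m) (prodEmb2 g)
      (fun a ha b hb => tRel_transfer hg a b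
        (mem_uSetF_bound (by omega) a ha) (mem_uSetF_bound (by omega) b hb))
    rw [← t1, ← t2]
    exact hsc

theorem profU {lt : ℕ → ℕ → Prop} (hc : HasChains lt) {n k m : ℕ}
    (hm : 6*k+9 ≤ m) (hn : n = m + k) : 2^k ≤ profile (uRel lt) n := by
  obtain ⟨g, hg⟩ := hc m
  apply profile_ge_pow (uRel lt) n k (fun f => (uSwapF f m).map (prodEmb2 g))
  · intro f; rw [Finset.card_map, card_uSwapF, hn]
  · intro f f' hsc
    refine coreU hm f f' ?_
    have t1 := scoreM_map (uRel lt) (uRel (· < ·)) (uSwapF f m) (prodEmb2 g)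
      (fun a ha b hb => uRel_transfer hg a b
        (mem_uSwapF_bound (by omega) a ha) (mem_uSwapF_bound (by omega) b hb))
    have t2 := scoreM_map (uRel lt) (uRel (· < ·)) (uSwapF f' m) (prodEmb2 g)
      (fun a ha b hb => uRel_transfer hg a b
        (mem_uSwapF_bound (by omega) a ha) (mem_uSwapF_bound (by omega) b hb))
    rw [← t1, ← t2]
    exact hsc

theorem profC3 {lt : ℕ → ℕ → Prop} (hc : HasChains lt) {n k m : ℕ}
    (hm : 6*k+9 ≤ m) (hn : n = m + 2*k) : 2^k ≤ profile (c3Rel lt) n := by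
  obtain ⟨g, hg⟩ := hc m
  apply profile_ge_pow (c3Rel lt) n k (fun f => (uC3 f m).map (prodEmb3 g))
  · intro f; rw [Finset.card_map, card_uC3, hn]
  · intro f f' hsc
    refine coreC3 hm f f' ?_
    have t1 := scoreM_map (c3Rel lt) (c3Rel (· < ·)) (uC3 f m) (prodEmb3 g)
      (fun a ha b hb => c3Rel_transfer hg a b
        (mem_uC3_bound (by omega) a ha) (mem_uC3_bound (by omega) b hb))
    have t2 := scoreM_map (c3Rel lt) (c3Rel (· < ·)) (uC3 f' m) (prodEmb3 g)
      (fun a ha b hb => c3Rel_transfer hg a b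
        (mem_uC3_bound (by omega) a ha) (mem_uC3_bound (by omega) b hb))
    rw [← t1, ← t2]
    exact hsc

theorem profV {lt : ℕ → ℕ → Prop} (hc : HasChains lt) {n k m : ℕ}
    (hm : 6*k+9 ≤ m) (hn : n = m + k + 1) : 2^k ≤ profile (vRel lt) n := by
  obtain ⟨g, hg⟩ := hc m
  apply profile_ge_pow (vRel lt) n k (fun f => (uV f m).map (optEmb g))
  · intro f; rw [Finset.card_map, card_uV, hn]
  · intro f f' hsc
    refine coreV hm f f' ?_
    have t1 := scoreM_map (vRel lt) (vRel (· < ·)) (uV f m) (optEmb g)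
      (fun a ha b hb => vRel_transfer hg a b
        (mem_uV_bound (by omega) a ha) (mem_uV_bound (by omega) b hb))
    have t2 := scoreM_map (vRel lt) (vRel (· < ·)) (uV f' m) (optEmb g)
      (fun a ha b hb => vRel_transfer hg a b
        (mem_uV_bound (by omega) a ha) (mem_uV_bound (by omega) b hb))
    rw [← t1, ← t2]
    exact hsc

end ProfileBounds

section RealGlue

theorem pow107 (n : ℕ) : ((107:ℝ)/100)^n ≤ 2^(n/10 + 1) := by
  induction n using Nat.strong_induction_on with
  | _ n ih =>
    rcases Nat.lt_or_ge n 10 with h | h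
    · calc ((107:ℝ)/100)^n ≤ ((107:ℝ)/100)^9 :=
            pow_le_pow_right₀ (by norm_num) (by omega)
        _ ≤ 2 := by norm_num
        _ = 2^1 := (pow_one 2).symm
        _ ≤ 2^(n/10+1) := pow_le_pow_right₀ (by norm_num) (by omega)
    · have := ih (n - 10) (by omega)
      calc ((107:ℝ)/100)^n = ((107:ℝ)/100)^(n-10) * ((107:ℝ)/100)^10 := by
            rw [← pow_add]; congr 1; omega
        _ ≤ 2^((n-10)/10+1) * 2 := by
            apply mul_le_mul this (by norm_num) (by positivity) (by positivity)
        _ = 2^((n-10)/10+2) := by rw [← pow_succ]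
        _ ≤ 2^(n/10+1) := pow_le_pow_right₀ (by norm_num) (by omega)

theorem main_bound {V : Type} (r : V → V → Prop) [Infinite V]
    (hbig : ∀ n, 100 ≤ n → 2^(n/10) ≤ profile r n) :
    ∃ a c : ℝ, 0 < a ∧ 1 < c ∧ ∀ n : ℕ, a * c^n ≤ (profile r n : ℝ) := by
  refine ⟨(1/2)^11, 107/100, by positivity, by norm_num, ?_⟩
  intro n
  have hprof1 : (1:ℝ) ≤ (profile r n : ℝ) := by
    exact_mod_cast one_le_profile r n
  have hp107 := pow107 n
  have hpos : (0:ℝ) < ((107:ℝ)/100)^n := by positivity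
  rcases Nat.lt_or_ge n 100 with h | h
  · have h2 : ((107:ℝ)/100)^n ≤ 2^10 := by
      calc ((107:ℝ)/100)^n ≤ 2^(n/10+1) := hp107
        _ ≤ 2^10 := pow_le_pow_right₀ (by norm_num) (by omega)
    calc (1/2:ℝ)^11 * (107/100)^n ≤ (1/2:ℝ)^11 * 2^10 := by
          apply mul_le_mul_of_nonneg_left h2 (by positivity)
      _ ≤ 1 := by norm_num
      _ ≤ (profile r n : ℝ) := hprof1
  · have hP : (2:ℝ)^(n/10) ≤ (profile r n : ℝ) := by
      exact_mod_cast hbig n h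
    calc (1/2:ℝ)^11 * (107/100)^n ≤ (1/2:ℝ)^11 * 2^(n/10+1) := by
          apply mul_le_mul_of_nonneg_left hp107 (by positivity)
      _ ≤ 2^(n/10) := by
          have heq : ((1:ℝ)/2)^11 * 2^(n/10+1) = 2^(n/10) * ((2:ℝ) * (1/2)^11) := by
            rw [pow_succ]; ring
          rw [heq]
          nth_rewrite 2 [show ((2:ℝ)^(n/10)) = 2^(n/10) * 1 by ring]
          apply mul_le_mul_of_nonneg_left (by norm_num) (by positivity)
      _ ≤ (profile r n : ℝ) := hP
end RealGlue


section Chains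
theorem chains_omegaLT : HasChains omegaLT :=
  fun _ => ⟨Function.Embedding.refl ℕ, fun _ _ _ _ => Iff.rfl⟩

theorem chains_omegaStarLT : HasChains omegaStarLT := by
  intro m
  refine ⟨⟨fun i => if i < m then m - 1 - i else i + m, ?_⟩, ?_⟩
  · intro x y h
    by_cases hx : x < m <;> by_cases hy : y < m <;> simp [hx, hy] at h <;> omega
  · intro a b ha hb
    simp [omegaStarLT, DFunLike.coe, ha, hb]
    omega
end Chains

/-- For every tournament `T ∈ 𝔅` the profile of `T` grows at least
exponentially: there are reals `a > 0` and `c > 1` with `φ_T(n) ≥ a·cⁿ` for all `n`. -/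
theorem frakB_profile_exponential :
    ∀ S ∈ frakB, ∃ a c : ℝ, 0 < a ∧ 1 < c ∧ ∀ n : ℕ, a * c ^ n ≤ (S.profile n : ℝ) := by
  intro S hS
  simp only [frakB, List.mem_cons, List.not_mem_nil, or_false] at hS
  rcases hS with rfl | rfl | rfl | rfl | rfl | rfl | rfl | rfl | rfl | rfl | rfl | rfl
  · exact main_bound (c3Rel omegaLT) (fun n hn =>
      profC3 chains_omegaLT (k := n/10) (m := n - 2*(n/10)) (by omega) (by omega))
  · exact main_bound (vRel omegaLT) (fun n hn =>
      profV chains_omegaLT (k := n/10) (m := n - (n/10) - 1) (by omega) (by omega))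
  · exact main_bound (tRel omegaLT) (fun n hn =>
      profT chains_omegaLT (k := n/10) (m := n - (n/10)) (by omega) (by omega))
  · exact main_bound (uRel omegaLT) (fun n hn =>
      profU chains_omegaLT (k := n/10) (m := n - (n/10)) (by omega) (by omega))
  · exact main_bound (hRel omegaLT) (fun n hn =>
      profH chains_omegaLT (k := n/10) (m := n - (n/10)) (by omega) (by omega))
  · exact main_bound (kRel omegaLT) (fun n hn =>
      profK chains_omegaLT (k := n/10) (m := n - (n/10)) (by omega) (by omega))
  · exact main_bound (c3Rel omegaStarLT) (fun n hn =>
      profC3 chains_omegaStarLT (k := n/10) (m := n - 2*(n/10)) (by omega) (by omega))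
  · exact main_bound (vRel omegaStarLT) (fun n hn =>
      profV chains_omegaStarLT (k := n/10) (m := n - (n/10) - 1) (by omega) (by omega))
  · exact main_bound (tRel omegaStarLT) (fun n hn =>
      profT chains_omegaStarLT (k := n/10) (m := n - (n/10)) (by omega) (by omega))
  · exact main_bound (uRel omegaStarLT) (fun n hn =>
      profU chains_omegaStarLT (k := n/10) (m := n - (n/10)) (by omega) (by omega))
  · exact main_bound (hRel omegaStarLT) (fun n hn =>
      profH chains_omegaStarLT (k := n/10) (m := n - (n/10)) (by omega) (by omega))
  · exact main_bound (kRel omegaStarLT) (fun n hn =>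
      profK chains_omegaStarLT (k := n/10) (m := n - (n/10)) (by omega) (by omega))
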